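/- arXiv:1111.5950 — 8 statements merged into one kernel-verified Lean document; each statement's English description precedes it below -/
import Mathlib

section
/- Let X and N be independent real random variables with X distributed as the centered Gaussian law of variance σ_X² > 0 and N distributed as the centered Gaussian law of variance σ_N² > 0, and set Y = X + N. Then for every measurable g : ℝ → ℝ such that g(Y)·Y, g(Y)·X and g(Y)·N are integrable, the three linear regression coefficients coincide: E[g(Y)·Y]/E[Y²] = E[g(Y)·X]/E[X²] = E[g(Y)·N]/E[N²]. -/
open MeasureTheory ProbabilityTheory

namespace EqualGainAux

open Real Filter Set


variable {v : NNReal}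

lemma coe_pos (hv : v ≠ 0) : (0:ℝ) < (v:ℝ) := by
  exact_mod_cast pos_iff_ne_zero.mpr hv

lemma b_pos (hv : v ≠ 0) : (0:ℝ) < (2 * (v:ℝ))⁻¹ :=
  inv_pos.mpr (by have := coe_pos hv; linarith)

lemma int_exp (hv : v ≠ 0) : Integrable (fun x : ℝ => rexp (-x ^ 2 / (2 * (v:ℝ)))) := by
  have e : (fun x : ℝ => rexp (-x ^ 2 / (2 * (v:ℝ))))
      = fun x => rexp (-(2 * (v:ℝ))⁻¹ * x ^ 2) := by
    funext x; congr 1; ring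
  rw [e]; exact integrable_exp_neg_mul_sq (b_pos hv)

lemma int_id (hv : v ≠ 0) : Integrable (fun x : ℝ => x * rexp (-x ^ 2 / (2 * (v:ℝ)))) := by
  have e : (fun x : ℝ => x * rexp (-x ^ 2 / (2 * (v:ℝ))))
      = fun x => x * rexp (-(2 * (v:ℝ))⁻¹ * x ^ 2) := by
    funext x; congr 2; ring
  rw [e]; exact integrable_mul_exp_neg_mul_sq (b_pos hv)

lemma int_sq (hv : v ≠ 0) : Integrable (fun x : ℝ => x ^ 2 * rexp (-x ^ 2 / (2 * (v:ℝ)))) := by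
  have h := integrable_rpow_mul_exp_neg_mul_sq (b_pos hv)
    (by norm_num : (-1:ℝ) < ((2:ℕ):ℝ))
  have e : (fun x : ℝ => x ^ ((2:ℕ):ℝ) * rexp (-(2 * (v:ℝ))⁻¹ * x ^ 2))
      = fun x : ℝ => x ^ 2 * rexp (-x ^ 2 / (2 * (v:ℝ))) := by
    funext x; rw [Real.rpow_natCast]; congr 2; ring
  rw [e] at h; exact h

lemma pdf_eq (m : ℝ) (v : NNReal) (x : ℝ) :
    gaussianPDFReal m v x = (√(2 * π * (v:ℝ)))⁻¹ * rexp (-(x - m) ^ 2 / (2 * (v:ℝ))) := rfl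

lemma pdf0_eq (v : NNReal) (x : ℝ) :
    gaussianPDFReal 0 v x = (√(2 * π * (v:ℝ)))⁻¹ * rexp (-x ^ 2 / (2 * (v:ℝ))) := by
  rw [pdf_eq]; norm_num

lemma integral_pdf0_aux (hv : v ≠ 0) :
    ∫ x : ℝ, (√(2 * π * (v:ℝ)))⁻¹ * rexp (-x ^ 2 / (2 * (v:ℝ))) = 1 := by
  have h := integral_gaussianPDFReal_eq_one 0 hv
  simp only [pdf0_eq] at h
  exact h

lemma integrable_pdf_mul_id (m : ℝ) (hv : v ≠ 0) :
    Integrable (fun x => gaussianPDFReal m v x * x) := by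
  set C := (√(2 * π * (v:ℝ)))⁻¹ with hC
  have h1 : Integrable (fun t : ℝ => C * rexp (-t ^ 2 / (2 * (v:ℝ))) * (t + m)) := by
    have e : (fun t : ℝ => C * rexp (-t ^ 2 / (2 * (v:ℝ))) * (t + m))
        = fun t => C * (t * rexp (-t ^ 2 / (2 * (v:ℝ)))) + (C * m) * rexp (-t ^ 2 / (2 * (v:ℝ))) := by
      funext t; ring
    rw [e]; exact ((int_id hv).const_mul C).add ((int_exp hv).const_mul (C * m))
  have h2 := h1.comp_sub_right m
  have e2 : (fun x : ℝ => C * rexp (-(x - m) ^ 2 / (2 * (v:ℝ))) * (x - m + m))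
      = fun x => gaussianPDFReal m v x * x := by
    funext x; rw [pdf_eq]; ring
  rw [← e2]; exact h2

lemma integrable_pdf_mul_sq (hv : v ≠ 0) :
    Integrable (fun x => gaussianPDFReal 0 v x * x ^ 2) := by
  set C := (√(2 * π * (v:ℝ)))⁻¹ with hC
  have e : (fun x : ℝ => gaussianPDFReal 0 v x * x ^ 2)
      = fun x => C * (x ^ 2 * rexp (-x ^ 2 / (2 * (v:ℝ)))) := by
    funext x; rw [pdf0_eq]; ring
  rw [e]; exact (int_sq hv).const_mul C

lemma integral_pdf_mul_id (m : ℝ) (hv : v ≠ 0) :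
    ∫ x, gaussianPDFReal m v x * x = m := by
  set C := (√(2 * π * (v:ℝ)))⁻¹ with hC
  have e2 : (fun x : ℝ => gaussianPDFReal m v x * x)
      = fun x : ℝ => (fun t : ℝ => C * rexp (-t ^ 2 / (2 * (v:ℝ))) * (t + m)) (x - m) := by
    funext x; rw [pdf_eq, hC]; ring_nf
  rw [e2, integral_sub_right_eq_self (fun t => C * rexp (-t ^ 2 / (2 * (v:ℝ))) * (t + m)) m]
  have hzero : ∫ t : ℝ, t * rexp (-t ^ 2 / (2 * (v:ℝ))) = 0 := by
    have h := integral_neg_eq_self (fun t : ℝ => t * rexp (-t ^ 2 / (2 * (v:ℝ)))) volume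
    simp only [neg_sq, neg_mul] at h
    rw [integral_neg] at h
    linarith
  have hexpand : (fun t : ℝ => C * rexp (-t ^ 2 / (2 * (v:ℝ))) * (t + m))
      = fun t => C * (t * rexp (-t ^ 2 / (2 * (v:ℝ)))) + m * (C * rexp (-t ^ 2 / (2 * (v:ℝ)))) :=
    funext fun t => by ring
  have h3 : C * ∫ a : ℝ, rexp (-a ^ 2 / (2 * (v:ℝ))) = 1 := by
    rw [← integral_const_mul]; exact integral_pdf0_aux hv
  rw [hexpand, integral_add (((int_id hv).const_mul C))
    (((int_exp hv).const_mul C).const_mul m), integral_const_mul, integral_const_mul, hzero,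
    integral_const_mul, h3]
  ring

lemma integral_pdf_mul_sq (hv : v ≠ 0) :
    ∫ x, gaussianPDFReal 0 v x * x ^ 2 = (v:ℝ) := by
  have hv' := coe_pos hv
  set C := (√(2 * π * (v:ℝ)))⁻¹ with hC
  have hderiv : ∀ x : ℝ, HasDerivAt (fun x : ℝ => -(v:ℝ) * (x * rexp (-x ^ 2 / (2 * (v:ℝ)))))
      (x ^ 2 * rexp (-x ^ 2 / (2 * (v:ℝ))) - (v:ℝ) * rexp (-x ^ 2 / (2 * (v:ℝ)))) x := by
    intro x
    have h1 : HasDerivAt (fun x : ℝ => -x ^ 2 / (2 * (v:ℝ))) (-(2 * x) / (2 * (v:ℝ))) x := by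
      have h : HasDerivAt (fun x : ℝ => x ^ 2) (2 * x) x := by
        simpa using hasDerivAt_pow 2 x
      exact h.neg.div_const _
    have h2 := h1.exp
    have h3 := (hasDerivAt_id x).mul h2
    have h4 := h3.const_mul (-(v:ℝ))
    refine h4.congr_deriv ?_
    field_simp
    simp only [id]; ring
  have hint' : Integrable (fun x : ℝ =>
      x ^ 2 * rexp (-x ^ 2 / (2 * (v:ℝ))) - (v:ℝ) * rexp (-x ^ 2 / (2 * (v:ℝ)))) :=
    (int_sq hv).sub ((int_exp hv).const_mul _)
  have hintF : Integrable (fun x : ℝ => -(v:ℝ) * (x * rexp (-x ^ 2 / (2 * (v:ℝ))))) :=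
    (int_id hv).const_mul _
  have h0 := integral_eq_zero_of_hasDerivAt_of_integrable hderiv hint' hintF
  rw [integral_sub (int_sq hv) ((int_exp hv).const_mul _), integral_const_mul] at h0
  have h1 : (∫ x, gaussianPDFReal 0 v x * x ^ 2)
      = C * ∫ x : ℝ, x ^ 2 * rexp (-x ^ 2 / (2 * (v:ℝ))) := by
    rw [← integral_const_mul]
    congr 1; funext x; rw [pdf0_eq]; ring
  have h2 : C * ((v:ℝ) * ∫ x : ℝ, rexp (-x ^ 2 / (2 * (v:ℝ))))
      = (v:ℝ) * ∫ x : ℝ, C * rexp (-x ^ 2 / (2 * (v:ℝ))) := by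
    rw [integral_const_mul]; ring
  rw [h1, show (∫ x : ℝ, x ^ 2 * rexp (-x ^ 2 / (2 * (v:ℝ))))
      = (v:ℝ) * ∫ x : ℝ, rexp (-x ^ 2 / (2 * (v:ℝ))) by linarith, h2, integral_pdf0_aux hv]
  ring


lemma pdf_factor (vX vN : NNReal) (hvX : vX ≠ 0) (hvN : vN ≠ 0) (x y : ℝ) :
    gaussianPDFReal 0 vX x * gaussianPDFReal 0 vN (y - x)
      = gaussianPDFReal 0 (vX + vN) y
        * gaussianPDFReal ((vX:ℝ) * y / ((vX:ℝ) + (vN:ℝ))) (vX * vN / (vX + vN)) x := by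
  have ha := coe_pos hvX
  have hc := coe_pos hvN
  have hs : (0:ℝ) < (vX:ℝ) + (vN:ℝ) := by linarith
  have hw : ((vX * vN / (vX + vN) : NNReal) : ℝ) = (vX:ℝ) * (vN:ℝ) / ((vX:ℝ) + (vN:ℝ)) := by
    push_cast; ring
  rw [pdf0_eq, pdf0_eq, pdf0_eq, pdf_eq, hw, NNReal.coe_add]
  set a := (vX:ℝ)
  set c := (vN:ℝ)
  have hconst : (√(2*π*a))⁻¹ * (√(2*π*c))⁻¹
      = (√(2*π*(a+c)))⁻¹ * (√(2*π*(a*c/(a+c))))⁻¹ := by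
    rw [← mul_inv, ← mul_inv, ← Real.sqrt_mul (by positivity), ← Real.sqrt_mul (by positivity)]
    congr 2
    field_simp
  have hexp : rexp (-x^2/(2*a)) * rexp (-(y-x)^2/(2*c))
      = rexp (-y^2/(2*(a+c))) * rexp (-(x - a*y/(a+c))^2/(2*(a*c/(a+c)))) := by
    rw [← Real.exp_add, ← Real.exp_add]
    congr 1
    field_simp
    ring
  calc (√(2*π*a))⁻¹ * rexp (-x^2/(2*a)) * ((√(2*π*c))⁻¹ * rexp (-(y-x)^2/(2*c)))
      = ((√(2*π*a))⁻¹ * (√(2*π*c))⁻¹) * (rexp (-x^2/(2*a)) * rexp (-(y-x)^2/(2*c))) := by ring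
    _ = ((√(2*π*(a+c)))⁻¹ * (√(2*π*(a*c/(a+c))))⁻¹)
        * (rexp (-y^2/(2*(a+c))) * rexp (-(x - a*y/(a+c))^2/(2*(a*c/(a+c))))) := by
        rw [hconst, hexp]
    _ = (√(2*π*(a+c)))⁻¹ * rexp (-y^2/(2*(a+c)))
        * ((√(2*π*(a*c/(a+c))))⁻¹ * rexp (-(x - a*y/(a+c))^2/(2*(a*c/(a+c))))) := by ring

lemma prod_gaussian_eq_withDensity (vX vN : NNReal) (hvX : vX ≠ 0) (hvN : vN ≠ 0) :
    (gaussianReal 0 vX).prod (gaussianReal 0 vN)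
      = (volume : Measure (ℝ × ℝ)).withDensity
          (fun p => ENNReal.ofReal (gaussianPDFReal 0 vX p.1 * gaussianPDFReal 0 vN p.2)) := by

  apply Measure.prod_eq
  intro s t hs ht
  rw [withDensity_apply _ (hs.prod ht), Measure.volume_eq_prod, ← Measure.prod_restrict]
  have he : ∀ p : ℝ × ℝ, ENNReal.ofReal (gaussianPDFReal 0 vX p.1 * gaussianPDFReal 0 vN p.2)
      = ENNReal.ofReal (gaussianPDFReal 0 vX p.1) * ENNReal.ofReal (gaussianPDFReal 0 vN p.2) :=
    fun p => ENNReal.ofReal_mul (gaussianPDFReal_nonneg _ _ _)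
  simp_rw [he]
  rw [lintegral_prod_mul ((measurable_gaussianPDFReal _ _).ennreal_ofReal).aemeasurable
    ((measurable_gaussianPDFReal _ _).ennreal_ofReal).aemeasurable]
  rw [gaussianReal_apply _ hvX _, gaussianReal_apply _ hvN _]
  rfl


/-- The shear `(x, n) ↦ (x, n + x)` as a measurable equivalence of `ℝ × ℝ`. -/
def shear : ℝ × ℝ ≃ᵐ ℝ × ℝ where
  toFun := fun z => (z.1, z.2 + z.1)
  invFun := fun z => (z.1, z.2 - z.1)
  left_inv := fun z => by simp
  right_inv := fun z => by simp
  measurable_toFun := (measurable_fst.prodMk (measurable_snd.add measurable_fst))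
  measurable_invFun := (measurable_fst.prodMk (measurable_snd.sub measurable_fst))

lemma key_transfer (vX vN : NNReal) (hvX : vX ≠ 0) (hvN : vN ≠ 0)
    (F : ℝ × ℝ → ℝ) (hF : Measurable F)
    (hFint : Integrable F ((gaussianReal 0 vX).prod (gaussianReal 0 vN))) :
    ∫ p, F p ∂((gaussianReal 0 vX).prod (gaussianReal 0 vN))
      = ∫ y, ∫ x, F (x, y - x) *
          (gaussianPDFReal 0 (vX + vN) y *
           gaussianPDFReal ((vX:ℝ) * y / ((vX:ℝ) + (vN:ℝ))) (vX * vN / (vX + vN)) x) := by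
  set d : ℝ × ℝ → ℝ := fun p => gaussianPDFReal 0 vX p.1 * gaussianPDFReal 0 vN p.2 with hd
  have hdmeas : Measurable d :=
    ((measurable_gaussianPDFReal _ _).comp measurable_fst).mul
      ((measurable_gaussianPDFReal _ _).comp measurable_snd)
  have hdnonneg : ∀ p, 0 ≤ d p := fun p =>
    mul_nonneg (gaussianPDFReal_nonneg _ _ _) (gaussianPDFReal_nonneg _ _ _)
  have hprod := prod_gaussian_eq_withDensity vX vN hvX hvN
  -- Step A: integral against the product measure as a Lebesgue integral with density
  have stepA : ∫ p, F p ∂((gaussianReal 0 vX).prod (gaussianReal 0 vN))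
      = ∫ p : ℝ × ℝ, d p * F p := by
    rw [hprod]
    have : (fun p : ℝ × ℝ => ENNReal.ofReal (d p))
        = fun p : ℝ × ℝ => ((Real.toNNReal (d p) : NNReal) : ENNReal) := rfl
    rw [this, integral_withDensity_eq_integral_smul (by fun_prop) F]
    congr 1
    funext p
    simp [NNReal.smul_def, Real.coe_toNNReal _ (hdnonneg p)]
  -- Step B: integrability with the density
  have stepB : Integrable (fun p : ℝ × ℝ => F p * d p) volume := by
    have h := hFint
    rw [hprod, integrable_withDensity_iff (hdmeas.ennreal_ofReal)
      (ae_of_all _ fun p => ENNReal.ofReal_lt_top)] at h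
    refine h.congr (ae_of_all _ fun p => ?_)
    dsimp only
    rw [ENNReal.toReal_ofReal (hdnonneg p)]
  -- Step C: shear change of variables
  have mp : MeasurePreserving (fun z : ℝ × ℝ => (z.1, z.2 + z.1))
      ((volume : Measure ℝ).prod volume) ((volume : Measure ℝ).prod volume) :=
    measurePreserving_prod_add_right volume volume
  have mp' : MeasurePreserving (fun z : ℝ × ℝ => (z.1, z.2 + z.1))
      (volume : Measure (ℝ × ℝ)) (volume : Measure (ℝ × ℝ)) := by
    rw [Measure.volume_eq_prod]; exact mp
  set H : ℝ × ℝ → ℝ := fun q => F (q.1, q.2 - q.1) * d (q.1, q.2 - q.1) with hH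
  have hHmeas : Measurable H :=
    (hF.comp (measurable_fst.prodMk (measurable_snd.sub measurable_fst))).mul
      (hdmeas.comp (measurable_fst.prodMk (measurable_snd.sub measurable_fst)))
  have hcomp : (H ∘ fun z : ℝ × ℝ => (z.1, z.2 + z.1)) = fun p : ℝ × ℝ => F p * d p := by
    funext z
    simp only [Function.comp, hH, add_sub_cancel_right]
  have hHint : Integrable H (volume : Measure (ℝ × ℝ)) := by
    rw [← mp'.integrable_comp hHmeas.aestronglyMeasurable, hcomp]
    exact stepB
  have stepC : ∫ p : ℝ × ℝ, d p * F p = ∫ q : ℝ × ℝ, H q := by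
    rw [← mp'.integral_comp shear.measurableEmbedding H]
    congr 1
    funext z
    simp only [hH, add_sub_cancel_right, Prod.mk.eta]
    ring
  -- Step D: rewrite the density via the factorization and apply Fubini
  have hHeq : H = fun q : ℝ × ℝ => F (q.1, q.2 - q.1) *
      (gaussianPDFReal 0 (vX + vN) q.2 *
        gaussianPDFReal ((vX:ℝ) * q.2 / ((vX:ℝ) + (vN:ℝ))) (vX * vN / (vX + vN)) q.1) := by
    funext q
    rw [hH]
    dsimp only
    rw [hd]
    dsimp only
    rw [pdf_factor vX vN hvX hvN q.1 q.2]
  rw [stepA, stepC, hHeq]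
  rw [Measure.volume_eq_prod] at hHint ⊢
  rw [hHeq] at hHint
  exact integral_prod_symm _ hHint

lemma integral_gaussianReal_eq {v : NNReal} (hv : v ≠ 0) (f : ℝ → ℝ) :
    ∫ x, f x ∂(gaussianReal 0 v) = ∫ x, gaussianPDFReal 0 v x * f x := by
  rw [gaussianReal_of_var_ne_zero _ hv, gaussianPDF_def]
  have h : (fun x : ℝ => ENNReal.ofReal (gaussianPDFReal 0 v x))
      = fun x : ℝ => ((Real.toNNReal (gaussianPDFReal 0 v x) : NNReal) : ENNReal) := rfl
  rw [h, integral_withDensity_eq_integral_smul ((measurable_gaussianPDFReal 0 v).real_toNNReal) f]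
  congr 1
  funext x
  simp [NNReal.smul_def, Real.coe_toNNReal _ (gaussianPDFReal_nonneg _ _ _)]

lemma integrable_gaussianReal_iff {v : NNReal} (hv : v ≠ 0) (f : ℝ → ℝ) :
    Integrable f (gaussianReal 0 v)
      ↔ Integrable (fun x => f x * gaussianPDFReal 0 v x) volume := by
  rw [gaussianReal_of_var_ne_zero _ hv, gaussianPDF_def,
    integrable_withDensity_iff ((measurable_gaussianPDFReal 0 v).ennreal_ofReal)
      (ae_of_all _ fun x => ENNReal.ofReal_lt_top)]
  constructor <;> intro h <;> refine h.congr (ae_of_all _ fun x => ?_) <;> dsimp only <;>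
    rw [ENNReal.toReal_ofReal (gaussianPDFReal_nonneg _ _ _)]

lemma key_fst (vX vN : NNReal) (hvX : vX ≠ 0) (hvN : vN ≠ 0)
    (f : ℝ → ℝ) (hf : Measurable f)
    (hint : Integrable (fun p : ℝ × ℝ => f (p.1 + p.2) * p.1)
      ((gaussianReal 0 vX).prod (gaussianReal 0 vN))) :
    ∫ p : ℝ × ℝ, f (p.1 + p.2) * p.1 ∂((gaussianReal 0 vX).prod (gaussianReal 0 vN))
      = ((vX:ℝ) / ((vX:ℝ) + (vN:ℝ))) * ∫ y, gaussianPDFReal 0 (vX + vN) y * (f y * y) := by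
  have hw : (vX * vN / (vX + vN) : NNReal) ≠ 0 := by
    have h1 : vX * vN ≠ 0 := mul_ne_zero hvX hvN
    have h2 : vX + vN ≠ 0 := by
      simp [add_eq_zero, hvX, hvN]
    simp [div_eq_mul_inv, mul_eq_zero, h1, h2]
  rw [key_transfer vX vN hvX hvN _ (by fun_prop) hint]
  dsimp only
  have hy : ∀ y : ℝ, (∫ x, f (x + (y - x)) * x *
      (gaussianPDFReal 0 (vX + vN) y
        * gaussianPDFReal ((vX:ℝ)*y/((vX:ℝ)+(vN:ℝ))) (vX*vN/(vX+vN)) x))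
      = (vX:ℝ)/((vX:ℝ)+(vN:ℝ)) * (gaussianPDFReal 0 (vX+vN) y * (f y * y)) := by
    intro y
    have he : (fun x => f (x + (y - x)) * x *
        (gaussianPDFReal 0 (vX + vN) y
          * gaussianPDFReal ((vX:ℝ)*y/((vX:ℝ)+(vN:ℝ))) (vX*vN/(vX+vN)) x))
        = fun x => (f y * gaussianPDFReal 0 (vX + vN) y)
          * (gaussianPDFReal ((vX:ℝ)*y/((vX:ℝ)+(vN:ℝ))) (vX*vN/(vX+vN)) x * x) := by
      funext x
      rw [show x + (y - x) = y from by ring]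
      ring
    rw [he, integral_const_mul, integral_pdf_mul_id _ hw]
    ring
  calc (∫ y, ∫ x, f (x + (y - x)) * x *
      (gaussianPDFReal 0 (vX + vN) y
        * gaussianPDFReal ((vX:ℝ)*y/((vX:ℝ)+(vN:ℝ))) (vX*vN/(vX+vN)) x))
      = ∫ y, (vX:ℝ)/((vX:ℝ)+(vN:ℝ)) * (gaussianPDFReal 0 (vX+vN) y * (f y * y)) := by
        congr 1; funext y; exact hy y
    _ = ((vX:ℝ) / ((vX:ℝ) + (vN:ℝ))) * ∫ y, gaussianPDFReal 0 (vX + vN) y * (f y * y) :=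
        integral_const_mul _ _

lemma key_sum (vX vN : NNReal) (hvX : vX ≠ 0) (hvN : vN ≠ 0)
    (f : ℝ → ℝ) (hf : Measurable f)
    (hint : Integrable (fun p : ℝ × ℝ => f (p.1 + p.2) * (p.1 + p.2))
      ((gaussianReal 0 vX).prod (gaussianReal 0 vN))) :
    ∫ p : ℝ × ℝ, f (p.1 + p.2) * (p.1 + p.2) ∂((gaussianReal 0 vX).prod (gaussianReal 0 vN))
      = ∫ y, gaussianPDFReal 0 (vX + vN) y * (f y * y) := by
  have hw : (vX * vN / (vX + vN) : NNReal) ≠ 0 := by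
    have h1 : vX * vN ≠ 0 := mul_ne_zero hvX hvN
    have h2 : vX + vN ≠ 0 := by
      simp [add_eq_zero, hvX, hvN]
    simp [div_eq_mul_inv, mul_eq_zero, h1, h2]
  rw [key_transfer vX vN hvX hvN _ (by fun_prop) hint]
  dsimp only
  have hy : ∀ y : ℝ, (∫ x, f (x + (y - x)) * (x + (y - x)) *
      (gaussianPDFReal 0 (vX + vN) y
        * gaussianPDFReal ((vX:ℝ)*y/((vX:ℝ)+(vN:ℝ))) (vX*vN/(vX+vN)) x))
      = gaussianPDFReal 0 (vX+vN) y * (f y * y) := by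
    intro y
    have he : (fun x => f (x + (y - x)) * (x + (y - x)) *
        (gaussianPDFReal 0 (vX + vN) y
          * gaussianPDFReal ((vX:ℝ)*y/((vX:ℝ)+(vN:ℝ))) (vX*vN/(vX+vN)) x))
        = fun x => (f y * y * gaussianPDFReal 0 (vX + vN) y)
          * gaussianPDFReal ((vX:ℝ)*y/((vX:ℝ)+(vN:ℝ))) (vX*vN/(vX+vN)) x := by
      funext x
      rw [show x + (y - x) = y from by ring]
      ring
    rw [he, integral_const_mul, integral_gaussianPDFReal_eq_one _ hw]
    ring
  calc (∫ y, ∫ x, f (x + (y - x)) * (x + (y - x)) *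
      (gaussianPDFReal 0 (vX + vN) y
        * gaussianPDFReal ((vX:ℝ)*y/((vX:ℝ)+(vN:ℝ))) (vX*vN/(vX+vN)) x))
      = ∫ y, gaussianPDFReal 0 (vX+vN) y * (f y * y) := by
        congr 1; funext y; exact hy y

end EqualGainAux

/-- Equal-gain theorem for independent zero-mean Gaussian inputs:
if `X ~ N(0, vX)`, `N ~ N(0, vN)` are independent and `Y = X + N`, then
`k_y = k_x = k_n` for any nonlinearity `g`. -/
theorem equal_gain_gaussian
    {Ω : Type*} {mΩ : MeasurableSpace Ω} (μ : Measure Ω) [IsProbabilityMeasure μ]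
    (X N : Ω → ℝ) (hXmeas : Measurable X) (hNmeas : Measurable N)
    (vX vN : NNReal) (hvX : 0 < vX) (hvN : 0 < vN)
    (hX : μ.map X = gaussianReal 0 vX) (hN : μ.map N = gaussianReal 0 vN)
    (hindep : IndepFun X N μ)
    (g : ℝ → ℝ) (hg : Measurable g)
    (hgY : Integrable (fun ω => g (X ω + N ω) * (X ω + N ω)) μ)
    (hgX : Integrable (fun ω => g (X ω + N ω) * X ω) μ)
    (hgN : Integrable (fun ω => g (X ω + N ω) * N ω) μ) :
    (∫ ω, g (X ω + N ω) * (X ω + N ω) ∂μ) / (∫ ω, (X ω + N ω) ^ 2 ∂μ)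
      = (∫ ω, g (X ω + N ω) * X ω ∂μ) / (∫ ω, X ω ^ 2 ∂μ)
    ∧ (∫ ω, g (X ω + N ω) * (X ω + N ω) ∂μ) / (∫ ω, (X ω + N ω) ^ 2 ∂μ)
      = (∫ ω, g (X ω + N ω) * N ω ∂μ) / (∫ ω, N ω ^ 2 ∂μ) := by
  have hvX' : vX ≠ 0 := hvX.ne'
  have hvN' : vN ≠ 0 := hvN.ne'
  have ha : (0:ℝ) < (vX:ℝ) := EqualGainAux.coe_pos hvX'
  have hc : (0:ℝ) < (vN:ℝ) := EqualGainAux.coe_pos hvN'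
  have hs : (0:ℝ) < (vX:ℝ) + (vN:ℝ) := by linarith
  have hpairmeas : Measurable (fun ω => (X ω, N ω)) := hXmeas.prodMk hNmeas
  have hmap : μ.map (fun ω => (X ω, N ω)) = (gaussianReal 0 vX).prod (gaussianReal 0 vN) := by
    rw [← hX, ← hN]
    exact (indepFun_iff_map_prod_eq_prod_map_map hXmeas.aemeasurable hNmeas.aemeasurable).mp
      hindep
  -- transfer of the two main integrals to the product measure
  have hE1 : ∫ ω, g (X ω + N ω) * X ω ∂μ
      = ∫ p : ℝ × ℝ, g (p.1 + p.2) * p.1 ∂((gaussianReal 0 vX).prod (gaussianReal 0 vN)) := by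
    rw [← hmap, integral_map hpairmeas.aemeasurable
      (by fun_prop : Measurable fun p : ℝ × ℝ => g (p.1 + p.2) * p.1).aestronglyMeasurable]
  have hE2 : ∫ ω, g (X ω + N ω) * (X ω + N ω) ∂μ
      = ∫ p : ℝ × ℝ, g (p.1 + p.2) * (p.1 + p.2)
          ∂((gaussianReal 0 vX).prod (gaussianReal 0 vN)) := by
    rw [← hmap, integral_map hpairmeas.aemeasurable
      (by fun_prop :
        Measurable fun p : ℝ × ℝ => g (p.1 + p.2) * (p.1 + p.2)).aestronglyMeasurable]
  have hI1 : Integrable (fun p : ℝ × ℝ => g (p.1 + p.2) * p.1)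
      ((gaussianReal 0 vX).prod (gaussianReal 0 vN)) := by
    rw [← hmap]
    exact (integrable_map_measure
      (by fun_prop : Measurable fun p : ℝ × ℝ => g (p.1 + p.2) * p.1).aestronglyMeasurable
      hpairmeas.aemeasurable).mpr hgX
  have hI2 : Integrable (fun p : ℝ × ℝ => g (p.1 + p.2) * (p.1 + p.2))
      ((gaussianReal 0 vX).prod (gaussianReal 0 vN)) := by
    rw [← hmap]
    exact (integrable_map_measure
      (by fun_prop :
        Measurable fun p : ℝ × ℝ => g (p.1 + p.2) * (p.1 + p.2)).aestronglyMeasurable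
      hpairmeas.aemeasurable).mpr hgY
  set I := ∫ y, gaussianPDFReal 0 (vX + vN) y * (g y * y) with hIdef
  have eX : ∫ ω, g (X ω + N ω) * X ω ∂μ = ((vX:ℝ)/((vX:ℝ)+(vN:ℝ))) * I := by
    rw [hE1, EqualGainAux.key_fst vX vN hvX' hvN' g hg hI1]
  have eY : ∫ ω, g (X ω + N ω) * (X ω + N ω) ∂μ = I := by
    rw [hE2, EqualGainAux.key_sum vX vN hvX' hvN' g hg hI2]
  have eN : ∫ ω, g (X ω + N ω) * N ω ∂μ = ((vN:ℝ)/((vX:ℝ)+(vN:ℝ))) * I := by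
    have hsub : ∫ ω, g (X ω + N ω) * N ω ∂μ
        = (∫ ω, g (X ω + N ω) * (X ω + N ω) ∂μ) - ∫ ω, g (X ω + N ω) * X ω ∂μ := by
      rw [← integral_sub hgY hgX]
      congr 1; funext ω; ring
    rw [hsub, eY, eX]
    field_simp
    ring
  -- second moments
  have dX : ∫ ω, X ω ^ 2 ∂μ = (vX:ℝ) := by
    rw [show (∫ ω, X ω ^ 2 ∂μ) = ∫ x, (fun x : ℝ => x ^ 2) x ∂(μ.map X) from
      (integral_map hXmeas.aemeasurable
        (by fun_prop : Measurable fun x : ℝ => x ^ 2).aestronglyMeasurable).symm,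
      hX, EqualGainAux.integral_gaussianReal_eq hvX']
    exact EqualGainAux.integral_pdf_mul_sq hvX'
  have dN : ∫ ω, N ω ^ 2 ∂μ = (vN:ℝ) := by
    rw [show (∫ ω, N ω ^ 2 ∂μ) = ∫ x, (fun x : ℝ => x ^ 2) x ∂(μ.map N) from
      (integral_map hNmeas.aemeasurable
        (by fun_prop : Measurable fun x : ℝ => x ^ 2).aestronglyMeasurable).symm,
      hN, EqualGainAux.integral_gaussianReal_eq hvN']
    exact EqualGainAux.integral_pdf_mul_sq hvN'
  have hXint : Integrable X μ := by
    have h1 : Integrable (fun x : ℝ => x) (gaussianReal 0 vX) := by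
      refine (EqualGainAux.integrable_gaussianReal_iff hvX' _).mpr ?_
      exact (EqualGainAux.integrable_pdf_mul_id 0 hvX').congr (ae_of_all _ fun x => by ring)
    rw [hX.symm] at h1
    exact (integrable_map_measure
      (by fun_prop : Measurable fun x : ℝ => x).aestronglyMeasurable
      hXmeas.aemeasurable).mp h1
  have hNint : Integrable N μ := by
    have h1 : Integrable (fun x : ℝ => x) (gaussianReal 0 vN) := by
      refine (EqualGainAux.integrable_gaussianReal_iff hvN' _).mpr ?_
      exact (EqualGainAux.integrable_pdf_mul_id 0 hvN').congr (ae_of_all _ fun x => by ring)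
    rw [hN.symm] at h1
    exact (integrable_map_measure
      (by fun_prop : Measurable fun x : ℝ => x).aestronglyMeasurable
      hNmeas.aemeasurable).mp h1
  have hX2int : Integrable (fun ω => X ω ^ 2) μ := by
    have h1 : Integrable (fun x : ℝ => x ^ 2) (gaussianReal 0 vX) := by
      refine (EqualGainAux.integrable_gaussianReal_iff hvX' _).mpr ?_
      exact (EqualGainAux.integrable_pdf_mul_sq hvX').congr (ae_of_all _ fun x => by ring)
    rw [hX.symm] at h1
    exact (integrable_map_measure
      (by fun_prop : Measurable fun x : ℝ => x ^ 2).aestronglyMeasurable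
      hXmeas.aemeasurable).mp h1
  have hN2int : Integrable (fun ω => N ω ^ 2) μ := by
    have h1 : Integrable (fun x : ℝ => x ^ 2) (gaussianReal 0 vN) := by
      refine (EqualGainAux.integrable_gaussianReal_iff hvN' _).mpr ?_
      exact (EqualGainAux.integrable_pdf_mul_sq hvN').congr (ae_of_all _ fun x => by ring)
    rw [hN.symm] at h1
    exact (integrable_map_measure
      (by fun_prop : Measurable fun x : ℝ => x ^ 2).aestronglyMeasurable
      hNmeas.aemeasurable).mp h1
  have hXNint : Integrable (X * N) μ := hindep.integrable_mul hXint hNint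
  have hEX : ∫ ω, X ω ∂μ = 0 := by
    rw [show (∫ ω, X ω ∂μ) = ∫ x, (fun x : ℝ => x) x ∂(μ.map X) from
      (integral_map hXmeas.aemeasurable
        (by fun_prop : Measurable fun x : ℝ => x).aestronglyMeasurable).symm,
      hX, EqualGainAux.integral_gaussianReal_eq hvX']
    exact EqualGainAux.integral_pdf_mul_id 0 hvX'
  have hEN : ∫ ω, N ω ∂μ = 0 := by
    rw [show (∫ ω, N ω ∂μ) = ∫ x, (fun x : ℝ => x) x ∂(μ.map N) from
      (integral_map hNmeas.aemeasurable
        (by fun_prop : Measurable fun x : ℝ => x).aestronglyMeasurable).symm,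
      hN, EqualGainAux.integral_gaussianReal_eq hvN']
    exact EqualGainAux.integral_pdf_mul_id 0 hvN'
  have hEXN : ∫ ω, X ω * N ω ∂μ = 0 := by
    have h := hindep.integral_mul_eq_mul_integral hXmeas.aestronglyMeasurable hNmeas.aestronglyMeasurable
    calc ∫ ω, X ω * N ω ∂μ = ∫ ω, (X * N) ω ∂μ := rfl
      _ = (∫ ω, X ω ∂μ) * ∫ ω, N ω ∂μ := h
      _ = 0 := by rw [hEX, hEN, mul_zero]
  have dY : ∫ ω, (X ω + N ω) ^ 2 ∂μ = (vX:ℝ) + (vN:ℝ) := by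
    have hexp : (fun ω => (X ω + N ω) ^ 2)
        = fun ω => (X ω ^ 2 + N ω ^ 2) + 2 * (X ω * N ω) := funext fun ω => by ring
    have hXN' : Integrable (fun ω => X ω * N ω) μ := hXNint
    have hsum : Integrable (fun ω => X ω ^ 2 + N ω ^ 2) μ := hX2int.add hN2int
    rw [hexp, integral_add hsum (hXN'.const_mul 2),
      integral_add hX2int hN2int, integral_const_mul, hEXN, dX, dN]
    ring
  rw [eX, eY, eN, dX, dN, dY]
  constructor
  · rw [div_eq_div_iff hs.ne' ha.ne']
    field_simp
  · rw [div_eq_div_iff hs.ne' hc.ne']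
    field_simp
end

section
/- Let Q ≥ 1 and let X₁, …, X_Q be independent, identically distributed real random variables with E[X₁] = 0 and 0 < E[X₁²] < ∞, and set Y = X₁ + ⋯ + X_Q. Then for every measurable g : ℝ → ℝ such that g(Y)·Y and g(Y)·X_i are integrable, and for every index i, the partial regression coefficient of g(Y) on X_i equals the input–output regression coefficient: E[g(Y)·X_i]/E[X_i²] = E[g(Y)·Y]/E[Y²]. -/
open MeasureTheory ProbabilityTheory

/-- Equal-gain theorem for the sum of `Q` i.i.d. zero-mean random variables:
for `Y = X₁ + ⋯ + X_Q`, every partial regression coefficient of `g(Y)` on `X_i`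
equals the input-output regression coefficient of `g(Y)` on `Y`. -/
theorem equal_gain_iid_sum
    {Ω : Type*} {mΩ : MeasurableSpace Ω} (μ : Measure Ω) [IsProbabilityMeasure μ]
    (Q : ℕ) (hQ : 1 ≤ Q) (X : Fin Q → Ω → ℝ)
    (hXmeas : ∀ i, Measurable (X i))
    (hindep : iIndepFun X μ)
    (hident : ∀ i j, μ.map (X i) = μ.map (X j))
    (hmean : ∀ i, ∫ ω, X i ω ∂μ = 0)
    (hX2 : ∀ i, MemLp (X i) 2 μ) (hX2pos : ∀ i, 0 < ∫ ω, X i ω ^ 2 ∂μ)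
    (g : ℝ → ℝ) (hg : Measurable g)
    (hgY : Integrable (fun ω => g (∑ j, X j ω) * (∑ j, X j ω)) μ)
    (hgX : ∀ i, Integrable (fun ω => g (∑ j, X j ω) * X i ω) μ)
    (i : Fin Q) :
    (∫ ω, g (∑ j, X j ω) * X i ω ∂μ) / (∫ ω, X i ω ^ 2 ∂μ)
      = (∫ ω, g (∑ j, X j ω) * (∑ j, X j ω) ∂μ) / (∫ ω, (∑ j, X j ω) ^ 2 ∂μ) := by
  classical
  set ν : Measure ℝ := μ.map (X i) with hν
  -- the joint law is the product measure
  set T : Ω → (Fin Q → ℝ) := fun ω j => X j ω with hT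
  have hTmeas : Measurable T := measurable_pi_lambda _ fun j => hXmeas j
  have hνprob : IsProbabilityMeasure ν := Measure.isProbabilityMeasure_map (hXmeas i).aemeasurable
  have hmapT : μ.map T = Measure.pi (fun _ : Fin Q => ν) := by
    symm
    apply Measure.pi_eq
    intro s hs
    rw [Measure.map_apply hTmeas (MeasurableSet.univ_pi hs)]
    have hpre : T ⁻¹' Set.pi Set.univ s = ⋂ j, X j ⁻¹' s j := by
      ext ω; simp [Set.mem_pi, T]
    rw [hpre, hindep.meas_iInter (fun j => ⟨s j, hs j, rfl⟩)]
    refine Finset.prod_congr rfl fun j _ => ?_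
    rw [hν, hident i j, Measure.map_apply (hXmeas j) (hs j)]
  -- transfer integrals to the product space
  have key : ∀ k, ∫ ω, g (∑ j, X j ω) * X k ω ∂μ
      = ∫ x : Fin Q → ℝ, g (∑ j, x j) * x k ∂(Measure.pi fun _ => ν) := by
    intro k
    rw [← hmapT]
    exact (integral_map hTmeas.aemeasurable
      (((hg.comp (Finset.measurable_sum _ fun j _ => measurable_pi_apply j)).mul
        (measurable_pi_apply k)).aestronglyMeasurable)).symm
  -- exchangeability: all partial covariances are equal
  have exch : ∀ k, ∫ ω, g (∑ j, X j ω) * X k ω ∂μ = ∫ ω, g (∑ j, X j ω) * X i ω ∂μ := by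
    intro k
    rw [key k, key i]
    have mp : MeasurePreserving (MeasurableEquiv.piCongrLeft (fun _ : Fin Q => ℝ)
        (Equiv.swap i k)) (Measure.pi fun _ => ν) (Measure.pi fun _ => ν) :=
      measurePreserving_piCongrLeft (fun _ => ν) (Equiv.swap i k)
    have := mp.integral_comp (MeasurableEquiv.measurableEmbedding _)
      (fun x : Fin Q → ℝ => g (∑ j, x j) * x i)
    rw [← this]
    refine integral_congr_ae (Filter.Eventually.of_forall fun x => ?_)
    have happ : ∀ j, MeasurableEquiv.piCongrLeft (fun _ : Fin Q => ℝ) (Equiv.swap i k) x j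
        = x (Equiv.swap i k j) := by
      intro j
      conv_lhs => rw [show j = Equiv.swap i k ((Equiv.swap i k).symm j) by simp]
      rw [MeasurableEquiv.piCongrLeft_apply_apply]
      simp
    have hsum : (∑ j, MeasurableEquiv.piCongrLeft (fun _ : Fin Q => ℝ) (Equiv.swap i k) x j)
        = ∑ j, x j := by
      simp_rw [happ]
      exact Equiv.sum_comp (Equiv.swap i k) x
    simp only [hsum, happ i, Equiv.swap_apply_left]
  -- numerator relation
  have hnum : ∫ ω, g (∑ j, X j ω) * (∑ j, X j ω) ∂μ
      = (Q : ℝ) * ∫ ω, g (∑ j, X j ω) * X i ω ∂μ := by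
    calc ∫ ω, g (∑ j, X j ω) * (∑ j, X j ω) ∂μ
        = ∫ ω, ∑ k, g (∑ j, X j ω) * X k ω ∂μ := by
          refine integral_congr_ae (Filter.Eventually.of_forall fun ω => ?_)
          simp only [Finset.mul_sum]
      _ = ∑ k, ∫ ω, g (∑ j, X j ω) * X k ω ∂μ := integral_finset_sum _ fun k _ => hgX k
      _ = ∑ _k : Fin Q, ∫ ω, g (∑ j, X j ω) * X i ω ∂μ := by
          exact Finset.sum_congr rfl fun k _ => exch k
      _ = (Q : ℝ) * ∫ ω, g (∑ j, X j ω) * X i ω ∂μ := by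
          simp [Finset.sum_const, nsmul_eq_mul]
  -- identical second moments
  have hsq : ∀ k, ∫ ω, X k ω ^ 2 ∂μ = ∫ ω, X i ω ^ 2 ∂μ := by
    intro k
    have h1 : ∫ ω, X k ω ^ 2 ∂μ = ∫ x : ℝ, x ^ 2 ∂(μ.map (X k)) := by
      rw [integral_map (hXmeas k).aemeasurable]
      exact (measurable_id.pow_const 2).aestronglyMeasurable
    have h2 : ∫ ω, X i ω ^ 2 ∂μ = ∫ x : ℝ, x ^ 2 ∂(μ.map (X i)) := by
      rw [integral_map (hXmeas i).aemeasurable]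
      exact (measurable_id.pow_const 2).aestronglyMeasurable
    rw [h1, h2, hident k i]
  -- denominator relation via variances
  have hdenom : ∫ ω, (∑ j, X j ω) ^ 2 ∂μ = (Q : ℝ) * ∫ ω, X i ω ^ 2 ∂μ := by
    have hYmem : MemLp (∑ k, X k) 2 μ := memLp_finset_sum' _ fun k _ => hX2 k
    have hYmean : ∫ ω, (∑ k, X k) ω ∂μ = 0 := by
      simp_rw [Finset.sum_apply]
      rw [integral_finset_sum _ fun k _ => (hX2 k).integrable one_le_two]
      simp [hmean]
    have hvar : variance (∑ k, X k) μ = ∑ k, variance (X k) μ :=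
      IndepFun.variance_sum (fun k _ => hX2 k)
        (fun k _ l _ hkl => hindep.indepFun hkl)
    have hvarY : variance (∑ k, X k) μ = ∫ ω, (∑ j, X j ω) ^ 2 ∂μ := by
      rw [variance_eq_sub hYmem, hYmean]
      simp [Finset.sum_apply]
    have hvarX : ∀ k, variance (X k) μ = ∫ ω, X k ω ^ 2 ∂μ := by
      intro k
      rw [variance_eq_sub (hX2 k), hmean k]
      simp [Pi.pow_apply]
    rw [← hvarY, hvar]
    simp_rw [hvarX, hsq]
    simp [Finset.sum_const, nsmul_eq_mul]
  rw [hnum, hdenom]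
  have hQ0 : (Q : ℝ) ≠ 0 := by positivity
  rw [mul_div_mul_left _ _ hQ0]
end

section
/- Let Z and X be square-integrable real random variables on a probability space with E[X²] > 0, and let k = E[Z·X]/E[X²] be the linear regression coefficient of Z on X. Then E[Z²]·E[(Z − X)²] ≥ (E[Z²] − k²·E[X²])·E[X²]. (Equivalently, with SNR = k²·E[X²]/(E[Z²] − k²·E[X²]) and MSE = E[(Z − X)²], whenever E[Z²] > k²·E[X²] one has 1 + SNR ≥ E[X²]/MSE, so the SNR-based capacity lower bound ½·log(1 + SNR) is at least the MSE-based bound ½·log(E[X²]/MSE).) -/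
open MeasureTheory ProbabilityTheory

/-- SNR-vs-MSE capacity bound comparison, in product form: for square-integrable
`Z`, `X` with `E[X²] > 0` and `k = E[Z·X]/E[X²]`, one has
`E[Z²]·E[(Z − X)²] ≥ (E[Z²] − k²·E[X²])·E[X²]`. -/
theorem snr_mse_bound_comparison
    {Ω : Type*} {mΩ : MeasurableSpace Ω} (μ : Measure Ω) [IsProbabilityMeasure μ]
    (Z X : Ω → ℝ) (hZmeas : Measurable Z) (hXmeas : Measurable X)
    (hZ2 : MemLp Z 2 μ) (hX2 : MemLp X 2 μ)
    (hX2pos : 0 < ∫ ω, X ω ^ 2 ∂μ) :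
    (∫ ω, Z ω ^ 2 ∂μ) * ∫ ω, (Z ω - X ω) ^ 2 ∂μ
      ≥ ((∫ ω, Z ω ^ 2 ∂μ)
          - ((∫ ω, Z ω * X ω ∂μ) / (∫ ω, X ω ^ 2 ∂μ)) ^ 2 * ∫ ω, X ω ^ 2 ∂μ)
        * ∫ ω, X ω ^ 2 ∂μ := by
  have hZsq : Integrable (fun ω => Z ω ^ 2) μ := hZ2.integrable_sq
  have hXsq : Integrable (fun ω => X ω ^ 2) μ := hX2.integrable_sq
  have hsum : Integrable (fun ω => (Z ω + X ω) ^ 2) μ := (hZ2.add hX2).integrable_sq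
  have hZX : Integrable (fun ω => Z ω * X ω) μ := by
    have : (fun ω => Z ω * X ω)
        = fun ω => ((Z ω + X ω) ^ 2 - Z ω ^ 2 - X ω ^ 2) / 2 := by
      funext ω; ring
    rw [this]
    exact ((hsum.sub hZsq).sub hXsq).div_const 2
  have hexp : ∫ ω, (Z ω - X ω) ^ 2 ∂μ
      = (∫ ω, Z ω ^ 2 ∂μ) - 2 * (∫ ω, Z ω * X ω ∂μ) + ∫ ω, X ω ^ 2 ∂μ := by
    have : ∀ ω, (Z ω - X ω) ^ 2 = Z ω ^ 2 - 2 * (Z ω * X ω) + X ω ^ 2 := by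
      intro ω; ring
    simp_rw [this]
    rw [integral_add (by exact (hZsq.sub (hZX.const_mul 2))) hXsq,
        integral_sub hZsq (hZX.const_mul 2), MeasureTheory.integral_const_mul]
  rw [hexp]
  set a := ∫ ω, Z ω ^ 2 ∂μ
  set b := ∫ ω, X ω ^ 2 ∂μ
  set c := ∫ ω, Z ω * X ω ∂μ
  have hb : b ≠ 0 := ne_of_gt hX2pos
  rw [ge_iff_le, div_pow]
  have key : (a - c ^ 2 / b ^ 2 * b) * b = a * b - c ^ 2 := by
    field_simp
  rw [key]
  nlinarith [sq_nonneg (a - c)]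
end

section
/- Let X and N be independent real random variables, X distributed as the centered Gaussian law of variance σ_X² > 0 and N as the centered Gaussian law of variance σ_N² > 0, let α_x, α_n be nonzero reals, and set Y = α_x·X + α_n·N. Then for every measurable g : ℝ → ℝ with Z = g(Y) such that Z·Y, Z·X and Z·N are integrable: E[Z·Y]/E[Y²] = (1/α_x)·E[Z·X]/E[X²] = (1/α_n)·E[Z·N]/E[N²]. -/
open MeasureTheory ProbabilityTheory Real
open scoped ENNReal NNReal

namespace SGR

/-- odd integral is zero -/
lemma integral_odd_zero (f : ℝ → ℝ) (hodd : ∀ x, f (-x) = - f x) :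
    ∫ x, f x = 0 := by
  have h := integral_neg_eq_self f (volume : Measure ℝ)
  simp_rw [hodd, integral_neg] at h
  linarith

lemma integral_mul_exp_neg_sq (k : ℝ) : ∫ x : ℝ, x * rexp (-(k * x ^ 2)) = 0 := by
  apply integral_odd_zero
  intro x; ring_nf

lemma integral_shift_mul_exp (k m : ℝ) :
    ∫ x : ℝ, (x - m) * rexp (-(k * (x - m) ^ 2)) = 0 := by
  rw [integral_sub_right_eq_self (fun y => y * rexp (-(k * y ^ 2))) m]
  exact integral_mul_exp_neg_sq k

/-- map of affine map on volume -/
lemma map_affine (b c : ℝ) (hb : b ≠ 0) :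
    Measure.map (fun u : ℝ => (u - c) / b) volume = ENNReal.ofReal |b| • volume := by
  have h1 : (fun u : ℝ => (u - c) / b) = (fun y : ℝ => y * b⁻¹) ∘ (fun u : ℝ => u - c) := by
    ext u; simp [div_eq_mul_inv]
  rw [h1, ← Measure.map_map (measurable_mul_const b⁻¹) (measurable_sub_const c)]
  rw [map_sub_right_eq_self volume c, Real.map_volume_mul_right (inv_ne_zero hb)]
  simp

open ENNReal in
lemma lintegral_affine (f : ℝ → ENNReal) (hf : Measurable f) (b c : ℝ) (hb : b ≠ 0) :
    ∫⁻ u : ℝ, f ((u - c) / b) = ENNReal.ofReal |b| * ∫⁻ x, f x := by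
  have := lintegral_map (μ := (volume : Measure ℝ)) hf
    (show Measurable (fun u : ℝ => (u - c)/b) by fun_prop)
  rw [map_affine b c hb] at this
  rw [← this, lintegral_smul_measure, smul_eq_mul]

lemma integral_affine (f : ℝ → ℝ) (b c : ℝ) :
    ∫ u : ℝ, f ((u - c) / b) = |b| * ∫ x, f x := by
  calc ∫ u : ℝ, f ((u - c) / b) = ∫ u : ℝ, (fun y => f (y / b)) (u - c) := by rfl
  _ = ∫ y : ℝ, f (y / b) := integral_sub_right_eq_self (fun y => f (y / b)) c
  _ = |b| * ∫ x, f x := by rw [MeasureTheory.Measure.integral_comp_div f b]; simp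

end SGR

namespace SGR
open ENNReal

lemma gaussianPDF_eq_coe (v : NNReal) :
    gaussianPDF 0 v = fun x => ((gaussianPDFReal 0 v x).toNNReal : ℝ≥0∞) := rfl

lemma integral_gaussianReal {v : NNReal} (hv : v ≠ 0) (f : ℝ → ℝ) :
    ∫ x, f x ∂(gaussianReal 0 v) = ∫ x, gaussianPDFReal 0 v x * f x := by
  rw [gaussianReal_of_var_ne_zero _ hv, gaussianPDF_eq_coe,
    integral_withDensity_eq_integral_smul (measurable_gaussianPDFReal 0 v).real_toNNReal]
  congr 1; ext x
  rw [NNReal.smul_def, Real.coe_toNNReal _ (gaussianPDFReal_nonneg _ _ _), smul_eq_mul]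

lemma integrable_gaussianReal_iff {v : NNReal} (hv : v ≠ 0) (f : ℝ → ℝ) :
    Integrable f (gaussianReal 0 v) ↔
      Integrable (fun x => gaussianPDFReal 0 v x * f x) volume := by
  rw [gaussianReal_of_var_ne_zero _ hv, gaussianPDF_eq_coe,
    integrable_withDensity_iff_integrable_smul (measurable_gaussianPDFReal 0 v).real_toNNReal]
  apply integrable_congr; filter_upwards with x
  rw [NNReal.smul_def, Real.coe_toNNReal _ (gaussianPDFReal_nonneg _ _ _), smul_eq_mul]

lemma gaussianPDFReal_eq (v : NNReal) (x : ℝ) :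
    gaussianPDFReal 0 v x = (√(2 * π * v))⁻¹ * rexp (-((2 * (v:ℝ))⁻¹ * x ^ 2)) := by
  rw [gaussianPDFReal]
  congr 1
  rw [Real.exp_eq_exp]
  by_cases h : (v : ℝ) = 0
  · simp [h]
  · field_simp
    ring

lemma moment_one {v : NNReal} (hv : 0 < v) :
    ∫ x, x ∂(gaussianReal 0 v) = 0 := by
  rw [integral_gaussianReal hv.ne']
  have : (fun x : ℝ => gaussianPDFReal 0 v x * x)
      = fun x => (√(2 * π * v))⁻¹ * (x * rexp (-((2 * (v:ℝ))⁻¹ * x ^ 2))) := by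
    ext x; rw [gaussianPDFReal_eq]; ring
  rw [this, MeasureTheory.integral_const_mul, integral_mul_exp_neg_sq]
  simp

lemma integral_sq_mul_exp {b : ℝ} (hb : 0 < b) :
    ∫ x : ℝ, x ^ 2 * rexp (-(b * x ^ 2)) = √π / 2 * b ^ (-(3:ℝ)/2) := by
  have habs := integral_comp_abs (f := fun t : ℝ => t ^ 2 * rexp (-(b * t ^ 2)))
  beta_reduce at habs
  simp only [sq_abs] at habs
  rw [habs]
  have h2 : ∫ x in Set.Ioi (0:ℝ), x ^ 2 * rexp (-(b * x ^ 2))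
      = ∫ x in Set.Ioi (0:ℝ), x ^ (2:ℝ) * rexp (-b * x ^ (2:ℝ)) := by
    apply setIntegral_congr_fun measurableSet_Ioi
    intro x _
    beta_reduce
    rw [show ((2:ℝ) = ((2:ℕ):ℝ)) by norm_num, Real.rpow_natCast]
    norm_num
  rw [h2, integral_rpow_mul_exp_neg_mul_rpow (by norm_num) (by norm_num) hb]
  rw [show ((2:ℝ)+1)/2 = 1/2 + 1 by norm_num, Real.Gamma_add_one (by norm_num),
    Real.Gamma_one_half_eq]
  rw [show (-((2:ℝ)+1)/2) = -(3:ℝ)/2 by norm_num]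
  ring

lemma moment_two {v : NNReal} (hv : 0 < v) :
    ∫ x, x ^ 2 ∂(gaussianReal 0 v) = v := by
  have hvpos : (0:ℝ) < v := hv
  rw [integral_gaussianReal hv.ne']
  have : (fun x : ℝ => gaussianPDFReal 0 v x * x ^ 2)
      = fun x => (√(2 * π * v))⁻¹ * (x ^ 2 * rexp (-((2 * (v:ℝ))⁻¹ * x ^ 2))) := by
    ext x; rw [gaussianPDFReal_eq]; ring
  rw [this, MeasureTheory.integral_const_mul, integral_sq_mul_exp (by positivity)]
  have h2v : (0:ℝ) < 2 * v := by positivity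
  rw [Real.inv_rpow h2v.le, ← Real.rpow_neg h2v.le, show -(-(3:ℝ)/2) = (3:ℝ)/2 by norm_num,
    show (3:ℝ)/2 = 1 + 1/2 by norm_num, Real.rpow_add h2v, Real.rpow_one,
    ← Real.sqrt_eq_rpow, show 2*π*(v:ℝ) = (2*(v:ℝ))*π by ring, Real.sqrt_mul h2v.le]
  have s1 : 0 < √(2*(v:ℝ)) := Real.sqrt_pos.2 h2v
  have s2 : 0 < √π := Real.sqrt_pos.2 pi_pos
  have hs : √(2*(v:ℝ)) * √(2*(v:ℝ)) = 2*(v:ℝ) := Real.mul_self_sqrt h2v.le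
  field_simp

end SGR

namespace SGR

lemma integrable_id_gauss {v : NNReal} (hv : 0 < v) :
    Integrable (fun x => x) (gaussianReal 0 v) := by
  rw [integrable_gaussianReal_iff hv.ne']
  have : (fun x : ℝ => gaussianPDFReal 0 v x * x)
      = fun x => (√(2 * π * v))⁻¹ * (x * rexp (-(2 * (v:ℝ))⁻¹ * x ^ 2)) := by
    ext x; rw [gaussianPDFReal_eq]; rw [neg_mul]; ring
  rw [this]
  exact (integrable_mul_exp_neg_mul_sq (by positivity)).const_mul _

lemma integrable_sq_gauss {v : NNReal} (hv : 0 < v) :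
    Integrable (fun x => x ^ 2) (gaussianReal 0 v) := by
  rw [integrable_gaussianReal_iff hv.ne']
  have h := (integrable_rpow_mul_exp_neg_mul_sq (b := (2 * (v:ℝ))⁻¹) (by positivity)
    (by norm_num : (-1:ℝ) < 2)).const_mul (√(2 * π * (v:ℝ)))⁻¹
  apply h.congr
  filter_upwards with x
  rw [gaussianPDFReal_eq, show ((2:ℝ) = ((2:ℕ):ℝ)) by norm_num, Real.rpow_natCast,
    neg_mul]
  push_cast
  ring

variable {v1 v2 : NNReal}

/-- joint density of product of two gaussians -/
noncomputable def D (v1 v2 : NNReal) (p : ℝ × ℝ) : ℝ :=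
  gaussianPDFReal 0 v1 p.1 * gaussianPDFReal 0 v2 p.2

lemma D_nonneg (v1 v2 : NNReal) (p : ℝ × ℝ) : 0 ≤ D v1 v2 p :=
  mul_nonneg (gaussianPDFReal_nonneg _ _ _) (gaussianPDFReal_nonneg _ _ _)

lemma measurable_D (v1 v2 : NNReal) : Measurable (D v1 v2) :=
  ((measurable_gaussianPDFReal 0 v1).comp measurable_fst).mul
    ((measurable_gaussianPDFReal 0 v2).comp measurable_snd)

lemma prod_gauss_eq (hv1 : v1 ≠ 0) (hv2 : v2 ≠ 0) :
    (gaussianReal 0 v1).prod (gaussianReal 0 v2)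
      = ((volume : Measure ℝ).prod volume).withDensity
          (fun p => ((D v1 v2 p).toNNReal : ℝ≥0∞)) := by
  have hcoe : (fun p : ℝ × ℝ => ((D v1 v2 p).toNNReal : ℝ≥0∞))
      = fun p => gaussianPDF 0 v1 p.1 * gaussianPDF 0 v2 p.2 := by
    ext p
    have h1 : ((D v1 v2 p).toNNReal : ℝ≥0∞) = ENNReal.ofReal (D v1 v2 p) := rfl
    have h2 : gaussianPDF 0 v1 p.1 = ENNReal.ofReal (gaussianPDFReal 0 v1 p.1) := rfl
    have h3 : gaussianPDF 0 v2 p.2 = ENNReal.ofReal (gaussianPDFReal 0 v2 p.2) := rfl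
    rw [h1, h2, h3]
    simp only [D]
    rw [ENNReal.ofReal_mul (gaussianPDFReal_nonneg _ _ _)]
  rw [hcoe]
  refine Measure.prod_eq fun s t hs ht => ?_
  rw [withDensity_apply _ (hs.prod ht), ← Measure.prod_restrict,
    lintegral_prod_mul ((measurable_gaussianPDF 0 v1).aemeasurable)
      ((measurable_gaussianPDF 0 v2).aemeasurable),
    ← gaussianReal_apply 0 hv1 s, ← gaussianReal_apply 0 hv2 t]

lemma integral_prod_gauss (hv1 : v1 ≠ 0) (hv2 : v2 ≠ 0) (f : ℝ × ℝ → ℝ) :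
    ∫ p, f p ∂((gaussianReal 0 v1).prod (gaussianReal 0 v2))
      = ∫ p, D v1 v2 p * f p ∂((volume : Measure ℝ).prod volume) := by
  rw [prod_gauss_eq hv1 hv2,
    integral_withDensity_eq_integral_smul ((measurable_D v1 v2).real_toNNReal)]
  congr 1; ext p
  rw [NNReal.smul_def, Real.coe_toNNReal _ (D_nonneg _ _ _), smul_eq_mul]

lemma integrable_prod_gauss_iff (hv1 : v1 ≠ 0) (hv2 : v2 ≠ 0) (f : ℝ × ℝ → ℝ) :
    Integrable f ((gaussianReal 0 v1).prod (gaussianReal 0 v2))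
      ↔ Integrable (fun p => D v1 v2 p * f p) ((volume : Measure ℝ).prod volume) := by
  rw [prod_gauss_eq hv1 hv2,
    integrable_withDensity_iff_integrable_smul ((measurable_D v1 v2).real_toNNReal)]
  apply integrable_congr; filter_upwards with p
  rw [NNReal.smul_def, Real.coe_toNNReal _ (D_nonneg _ _ _), smul_eq_mul]

end SGR

namespace SGR

variable {v1 v2 : NNReal}

lemma key_zero (hv1 : 0 < v1) (hv2 : 0 < v2) {a b : ℝ} (ha : a ≠ 0) (hb : b ≠ 0)
    (h : ℝ → ℝ) (hh : Measurable h)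
    (HI : Integrable (fun p : ℝ × ℝ =>
        h (a * p.1 + b * p.2) * (b * v2 * p.1 - a * v1 * p.2))
      ((gaussianReal 0 v1).prod (gaussianReal 0 v2))) :
    ∫ p, h (a * p.1 + b * p.2) * (b * v2 * p.1 - a * v1 * p.2)
      ∂((gaussianReal 0 v1).prod (gaussianReal 0 v2)) = 0 := by
  have hv1' : (0:ℝ) < v1 := hv1
  have hv2' : (0:ℝ) < v2 := hv2
  set s : ℝ := a^2 * v1 + b^2 * v2 with hs_def
  have hs : 0 < s := add_pos (mul_pos (pow_two_pos_of_ne_zero ha) hv1')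
    (mul_pos (pow_two_pos_of_ne_zero hb) hv2')
  set k : ℝ := s / (2 * v1 * b^2 * v2) with hk_def
  -- the kernel w.r.t. Lebesgue on ℝ²
  set K : ℝ × ℝ → ℝ := fun p =>
    D v1 v2 p * (h (a * p.1 + b * p.2) * (b * v2 * p.1 - a * v1 * p.2)) with hK_def
  have hKm : Measurable K := by
    apply (measurable_D v1 v2).mul
    exact ((hh.comp (by fun_prop)).mul (by fun_prop))
  have HK : Integrable K ((volume : Measure ℝ).prod volume) :=
    (integrable_prod_gauss_iff hv1.ne' hv2.ne' _).mp HI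
  rw [integral_prod_gauss hv1.ne' hv2.ne']
  -- shear-substituted kernel
  set T : ℝ × ℝ → ℝ × ℝ := fun q => (q.1, (q.2 - a * q.1) / b) with hT_def
  have hTm : Measurable T := by fun_prop
  have HH : Integrable (K ∘ T) ((volume : Measure ℝ).prod volume) := by
    refine ⟨(hKm.comp hTm).aestronglyMeasurable, ?_⟩
    have hfin := HK.2
    unfold MeasureTheory.HasFiniteIntegral at hfin ⊢
    simp only [Function.comp_apply, enorm_eq_nnnorm] at hfin ⊢
    have hmeas : Measurable fun p : ℝ × ℝ => (‖K (T p)‖₊ : ℝ≥0∞) :=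
      (hKm.comp hTm).nnnorm.coe_nnreal_ennreal
    rw [lintegral_prod _ hmeas.aemeasurable]
    have hinner : ∀ x : ℝ, ∫⁻ u, (‖K (T (x, u))‖₊ : ℝ≥0∞)
        = ENNReal.ofReal |b| * ∫⁻ n, (‖K (x, n)‖₊ : ℝ≥0∞) := by
      intro x
      exact lintegral_affine (fun n => (‖K (x, n)‖₊ : ℝ≥0∞))
        (hKm.comp (measurable_prodMk_left)).nnnorm.coe_nnreal_ennreal b (a * x) hb
    simp_rw [hinner]
    rw [lintegral_const_mul _ ((hKm.nnnorm.coe_nnreal_ennreal).lintegral_prod_right')]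
    rw [lintegral_prod _ (hKm.nnnorm.coe_nnreal_ennreal).aemeasurable] at hfin
    exact ENNReal.mul_lt_top ENNReal.ofReal_lt_top hfin
  -- iterated integral and slice substitution
  rw [show (∫ p, K p ∂((volume : Measure ℝ).prod volume))
      = ∫ x, ∫ n, K (x, n) ∂volume ∂volume from integral_prod K HK]
  have hslice : ∀ x : ℝ, ∫ n, K (x, n) = |b|⁻¹ * ∫ u, K (T (x, u)) := by
    intro x
    have := integral_affine (fun n => K (x, n)) b (a * x)
    rw [show (∫ u : ℝ, (fun n => K (x, n)) ((u - a * x) / b)) = ∫ u : ℝ, K (T (x, u)) from rfl]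
      at this
    rw [this]
    field_simp
  simp_rw [hslice]
  rw [MeasureTheory.integral_const_mul]
  have hswap : ∫ x, ∫ u, K (T (x, u)) = ∫ u, ∫ x, K (T (x, u)) := by
    apply integral_integral_swap
    exact HH.congr (by filter_upwards with p; rfl)
  rw [hswap]
  -- inner integral vanishes for every u
  have hzero : ∀ u : ℝ, ∫ x, K (T (x, u)) = 0 := by
    intro u
    set m0 : ℝ := a * v1 * u / s with hm0_def
    have hpt : ∀ x : ℝ, K (T (x, u)) =
        ((√(2 * π * v1))⁻¹ * (√(2 * π * v2))⁻¹ * h u * (s / b) * rexp (-(u^2 / (2*s))))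
          * ((x - m0) * rexp (-(k * (x - m0)^2))) := by
      intro x
      have harg : a * x + b * ((u - a * x) / b) = u := by field_simp; ring
      have hexp : rexp (-(x - 0)^2 / (2 * v1)) * rexp (-((u - a*x)/b - 0)^2 / (2 * v2))
          = rexp (-(k * (x - m0)^2)) * rexp (-(u^2 / (2*s))) := by
        rw [← Real.exp_add, ← Real.exp_add]
        congr 1
        rw [hk_def, hm0_def, hs_def]
        field_simp
        ring
      have haff : b * v2 * x - a * v1 * ((u - a*x)/b) = (s / b) * (x - m0) := by
        rw [hm0_def, hs_def]
        field_simp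
        ring
      show D v1 v2 (x, (u - a*x)/b) * (h (a * x + b * ((u - a*x)/b))
          * (b * v2 * x - a * v1 * ((u - a*x)/b))) = _
      rw [harg, haff]
      unfold D gaussianPDFReal
      dsimp only
      rw [show ((√(2 * π * v1))⁻¹ * rexp (-(x - 0)^2 / (2 * v1)))
            * ((√(2 * π * v2))⁻¹ * rexp (-((u - a*x)/b - 0)^2 / (2 * v2)))
          = (√(2 * π * v1))⁻¹ * (√(2 * π * v2))⁻¹
            * (rexp (-(x - 0)^2 / (2 * v1)) * rexp (-((u - a*x)/b - 0)^2 / (2 * v2))) by ring,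
        hexp]
      ring
    simp_rw [hpt]
    rw [MeasureTheory.integral_const_mul, integral_shift_mul_exp, mul_zero]
  simp_rw [hzero]
  simp

end SGR

open MeasureTheory ProbabilityTheory SGR

/-- Lemma 1: for independent centered Gaussians `X`, `N` and `Y = α_x·X + α_n·N`
with nonzero reals `α_x`, `α_n`, for any nonlinearity `Z = g(Y)`:
`E[Z·Y]/E[Y²] = (1/α_x)·E[Z·X]/E[X²] = (1/α_n)·E[Z·N]/E[N²]`. -/
theorem scaled_gaussian_regression
    {Ω : Type*} {mΩ : MeasurableSpace Ω} (μ : Measure Ω) [IsProbabilityMeasure μ]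
    (X N : Ω → ℝ) (hXmeas : Measurable X) (hNmeas : Measurable N)
    (vX vN : NNReal) (hvX : 0 < vX) (hvN : 0 < vN)
    (hX : μ.map X = gaussianReal 0 vX) (hN : μ.map N = gaussianReal 0 vN)
    (hindep : IndepFun X N μ)
    (αx αn : ℝ) (hαx : αx ≠ 0) (hαn : αn ≠ 0)
    (g : ℝ → ℝ) (hg : Measurable g)
    (hgY : Integrable (fun ω => g (αx * X ω + αn * N ω) * (αx * X ω + αn * N ω)) μ)
    (hgX : Integrable (fun ω => g (αx * X ω + αn * N ω) * X ω) μ)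
    (hgN : Integrable (fun ω => g (αx * X ω + αn * N ω) * N ω) μ) :
    (∫ ω, g (αx * X ω + αn * N ω) * (αx * X ω + αn * N ω) ∂μ)
        / (∫ ω, (αx * X ω + αn * N ω) ^ 2 ∂μ)
      = (1 / αx) * ((∫ ω, g (αx * X ω + αn * N ω) * X ω ∂μ) / (∫ ω, X ω ^ 2 ∂μ))
    ∧ (∫ ω, g (αx * X ω + αn * N ω) * (αx * X ω + αn * N ω) ∂μ)
        / (∫ ω, (αx * X ω + αn * N ω) ^ 2 ∂μ)
      = (1 / αn) * ((∫ ω, g (αx * X ω + αn * N ω) * N ω ∂μ) / (∫ ω, N ω ^ 2 ∂μ)) := by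
  have hv1' : (0:ℝ) < vX := hvX
  have hv2' : (0:ℝ) < vN := hvN
  set Pm : Measure (ℝ × ℝ) := (gaussianReal 0 vX).prod (gaussianReal 0 vN) with hPm_def
  have hpairm : Measurable (fun ω => (X ω, N ω)) := hXmeas.prodMk hNmeas
  have hmap : μ.map (fun ω => (X ω, N ω)) = Pm := by
    rw [(indepFun_iff_map_prod_eq_prod_map_map hXmeas.aemeasurable
      hNmeas.aemeasurable).mp hindep, hX, hN]
  -- transfer of integrals over the pair
  have htrans : ∀ F : ℝ × ℝ → ℝ, Measurable F →
      ∫ ω, F (X ω, N ω) ∂μ = ∫ p, F p ∂Pm := by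
    intro F hF
    rw [← hmap, integral_map hpairm.aemeasurable hF.aestronglyMeasurable]
  have htransInt : ∀ F : ℝ × ℝ → ℝ, Measurable F →
      Integrable (fun ω => F (X ω, N ω)) μ → Integrable F Pm := by
    intro F hF hI
    rw [← hmap]
    exact (integrable_map_measure hF.aestronglyMeasurable hpairm.aemeasurable).mpr hI
  have hFXm : Measurable fun p : ℝ × ℝ => g (αx * p.1 + αn * p.2) * p.1 := by
    exact (hg.comp (by fun_prop)).mul measurable_fst
  have hFNm : Measurable fun p : ℝ × ℝ => g (αx * p.1 + αn * p.2) * p.2 := by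
    exact (hg.comp (by fun_prop)).mul measurable_snd
  -- moments
  have hEX2 : ∫ ω, X ω ^ 2 ∂μ = vX := by
    rw [← moment_two hvX, ← hX, integral_map hXmeas.aemeasurable (by fun_prop)]
  have hEN2 : ∫ ω, N ω ^ 2 ∂μ = vN := by
    rw [← moment_two hvN, ← hN, integral_map hNmeas.aemeasurable (by fun_prop)]
  -- integrability of coordinates squared under Pm
  have hIsq1 : Integrable (fun p : ℝ × ℝ => p.1 ^ 2) Pm := by
    have h1 : Integrable (fun x : ℝ => x ^ 2) (Measure.map Prod.fst Pm) := by
      rw [Measure.map_fst_prod]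
      simpa using integrable_sq_gauss hvX
    exact (integrable_map_measure (by fun_prop) measurable_fst.aemeasurable).mp h1
  have hIsq2 : Integrable (fun p : ℝ × ℝ => p.2 ^ 2) Pm := by
    have h1 : Integrable (fun x : ℝ => x ^ 2) (Measure.map Prod.snd Pm) := by
      rw [Measure.map_snd_prod]
      simpa using integrable_sq_gauss hvN
    exact (integrable_map_measure (by fun_prop) measurable_snd.aemeasurable).mp h1
  have hI12 : Integrable (fun p : ℝ × ℝ => p.1 * p.2) Pm :=
    (integrable_id_gauss hvX).mul_prod (integrable_id_gauss hvN)
  -- second moment of Y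
  have hEY2 : ∫ ω, (αx * X ω + αn * N ω) ^ 2 ∂μ = αx^2 * vX + αn^2 * vN := by
    rw [htrans (fun p => (αx * p.1 + αn * p.2) ^ 2) (by fun_prop)]
    have hexp : (fun p : ℝ × ℝ => (αx * p.1 + αn * p.2) ^ 2)
        = fun p => (αx^2 * p.1^2 + αn^2 * p.2^2) + (2*αx*αn) * (p.1 * p.2) := by
      funext p; ring
    have Ia : Integrable (fun p : ℝ × ℝ => αx^2 * p.1^2 + αn^2 * p.2^2) Pm :=
      (hIsq1.const_mul _).add (hIsq2.const_mul _)
    have Ic : Integrable (fun p : ℝ × ℝ => 2*αx*αn * (p.1 * p.2)) Pm := hI12.const_mul _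
    rw [hexp, integral_add Ia Ic, integral_add (hIsq1.const_mul _) (hIsq2.const_mul _),
      MeasureTheory.integral_const_mul, MeasureTheory.integral_const_mul,
      MeasureTheory.integral_const_mul]
    have hprodmul : ∫ p : ℝ × ℝ, p.1 * p.2 ∂Pm
        = (∫ x, x ∂(gaussianReal 0 vX)) * (∫ x, x ∂(gaussianReal 0 vN)) :=
      integral_prod_mul (fun x => x) (fun x => x)
    rw [hprodmul, moment_one hvX, moment_one hvN]
    have h1 : ∫ p : ℝ × ℝ, p.1 ^ 2 ∂Pm = vX := by
      have := integral_prod_mul (μ := gaussianReal 0 vX) (ν := gaussianReal 0 vN)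
        (fun x => x ^ 2) (fun _ => (1:ℝ))
      simp only [mul_one, integral_const, measure_univ, ENNReal.toReal_one, probReal_univ, smul_eq_mul,
        one_mul] at this
      rw [this, moment_two hvX]
    have h2 : ∫ p : ℝ × ℝ, p.2 ^ 2 ∂Pm = vN := by
      have := integral_prod_mul (μ := gaussianReal 0 vX) (ν := gaussianReal 0 vN)
        (fun _ => (1:ℝ)) (fun x => x ^ 2)
      simp only [one_mul, integral_const, measure_univ, ENNReal.toReal_one, probReal_univ, smul_eq_mul] at this
      rw [this, moment_two hvN]
    rw [h1, h2]
    ring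
  -- numerator decomposition
  have hYdec : ∫ ω, g (αx * X ω + αn * N ω) * (αx * X ω + αn * N ω) ∂μ
      = αx * ∫ ω, g (αx * X ω + αn * N ω) * X ω ∂μ
        + αn * ∫ ω, g (αx * X ω + αn * N ω) * N ω ∂μ := by
    have hexp : (fun ω => g (αx * X ω + αn * N ω) * (αx * X ω + αn * N ω))
        = fun ω => αx * (g (αx * X ω + αn * N ω) * X ω)
          + αn * (g (αx * X ω + αn * N ω) * N ω) := by
      funext ω; ring
    rw [hexp, integral_add (hgX.const_mul _) (hgN.const_mul _),
      MeasureTheory.integral_const_mul, MeasureTheory.integral_const_mul]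
  -- the key relation
  have HX : Integrable (fun p : ℝ × ℝ => g (αx * p.1 + αn * p.2) * p.1) Pm :=
    htransInt _ hFXm hgX
  have HN : Integrable (fun p : ℝ × ℝ => g (αx * p.1 + αn * p.2) * p.2) Pm :=
    htransInt _ hFNm hgN
  have HI : Integrable (fun p : ℝ × ℝ =>
      g (αx * p.1 + αn * p.2) * (αn * vN * p.1 - αx * vX * p.2)) Pm := by
    apply ((HX.const_mul (αn * vN)).sub (HN.const_mul (αx * vX))).congr
    filter_upwards with p
    simp only [Pi.sub_apply]
    ring
  have hkey0 := key_zero hvX hvN hαx hαn g hg HI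
  have hkey : αn * vN * (∫ ω, g (αx * X ω + αn * N ω) * X ω ∂μ)
      = αx * vX * (∫ ω, g (αx * X ω + αn * N ω) * N ω ∂μ) := by
    rw [htrans _ hFXm, htrans _ hFNm]
    have hsplit : ∫ p, g (αx * p.1 + αn * p.2) * (αn * vN * p.1 - αx * vX * p.2) ∂Pm
        = αn * vN * (∫ p, g (αx * p.1 + αn * p.2) * p.1 ∂Pm)
          - αx * vX * (∫ p, g (αx * p.1 + αn * p.2) * p.2 ∂Pm) := by
      rw [← MeasureTheory.integral_const_mul, ← MeasureTheory.integral_const_mul,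
        ← integral_sub (HX.const_mul _) (HN.const_mul _)]
      apply integral_congr_ae
      filter_upwards with p
      ring
    rw [hsplit] at hkey0
    linarith
  -- final algebra
  set A := ∫ ω, g (αx * X ω + αn * N ω) * X ω ∂μ
  set B := ∫ ω, g (αx * X ω + αn * N ω) * N ω ∂μ
  rw [hYdec, hEY2, hEX2, hEN2]
  have hsne : αx^2 * (vX:ℝ) + αn^2 * (vN:ℝ) ≠ 0 := by positivity
  have hxv : αx * (vX:ℝ) ≠ 0 := mul_ne_zero hαx (ne_of_gt hv1')
  have hnv : αn * (vN:ℝ) ≠ 0 := mul_ne_zero hαn (ne_of_gt hv2')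
  constructor
  · rw [show (1/αx) * (A/(vX:ℝ)) = A/(αx * vX) by rw [div_mul_div_comm, one_mul],
      div_eq_div_iff hsne hxv]
    linear_combination (-αn) * hkey
  · rw [show (1/αn) * (B/(vN:ℝ)) = B/(αn * vN) by rw [div_mul_div_comm, one_mul],
      div_eq_div_iff hsne hnv]
    linear_combination αx * hkey
end

section
/- Let X and N be independent real random variables, X distributed as the centered Gaussian law of variance σ_X² > 0 and N as the centered Gaussian law of variance σ_N² > 0, and set Y = X + N. Let g : ℝ → ℝ be continuously differentiable such that g(Y)·X is integrable, g′(Y) is integrable, and y ↦ g(y)·exp(−y²/(2(σ_X²+σ_N²))) tends to 0 as y → ±∞. Then E[X·g(X + N)] = σ_X²·E[g′(X + N)]; in particular the partial regression coefficient k_x = E[g(Y)·X]/σ_X² equals the average derivative E[g′(Y)]. -/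
section SteinAux
open MeasureTheory ProbabilityTheory Filter Real

lemma my_integral_gaussian_eq {v : NNReal} (hv : v ≠ 0) (h : ℝ → ℝ) :
    ∫ x, h x ∂(gaussianReal 0 v) = ∫ x, gaussianPDFReal 0 v x * h x := by
  rw [gaussianReal_of_var_ne_zero _ hv]
  have hm : Measurable fun x => (gaussianPDFReal 0 v x).toNNReal :=
    (measurable_gaussianPDFReal 0 v).real_toNNReal
  have : (gaussianPDF 0 v) = fun x => ((gaussianPDFReal 0 v x).toNNReal : ENNReal) := by
    funext x; rfl
  rw [this, integral_withDensity_eq_integral_smul hm]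
  congr 1; funext x
  simp [NNReal.smul_def, Real.coe_toNNReal _ (gaussianPDFReal_nonneg 0 v x)]

lemma my_integrable_gaussian_iff {v : NNReal} (hv : v ≠ 0) (h : ℝ → ℝ) :
    Integrable h (gaussianReal 0 v) ↔ Integrable (fun x => gaussianPDFReal 0 v x * h x) volume := by
  rw [gaussianReal_of_var_ne_zero _ hv]
  have hm : Measurable fun x => (gaussianPDFReal 0 v x).toNNReal :=
    (measurable_gaussianPDFReal 0 v).real_toNNReal
  have : (gaussianPDF 0 v) = fun x => ((gaussianPDFReal 0 v x).toNNReal : ENNReal) := by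
    funext x; rfl
  rw [this, integrable_withDensity_iff_integrable_smul hm]
  constructor <;> intro hh <;> refine hh.congr (Filter.Eventually.of_forall fun x => ?_) <;>
    simp [NNReal.smul_def, Real.coe_toNNReal _ (gaussianPDFReal_nonneg 0 v x)]

lemma my_hasDerivAt_pdf {v : NNReal} (hv : v ≠ 0) (x : ℝ) :
    HasDerivAt (gaussianPDFReal 0 v) (-(x / v) * gaussianPDFReal 0 v x) x := by
  have hv' : (0:ℝ) < v := lt_of_le_of_ne (NNReal.coe_nonneg v) (by exact_mod_cast (Ne.symm hv))
  have h1 : HasDerivAt (fun y : ℝ => -(y - (0:ℝ))^2 / (2*(v:ℝ))) (-(x/v)) x := by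
    have h0 : HasDerivAt (fun y : ℝ => (y - (0:ℝ))^2) (2*(x-0)) x := by
      simpa using hasDerivAt_pow 2 x
    have := (h0.neg).div_const (2*(v:ℝ))
    convert this using 1
    all_goals try rfl
    field_simp
    ring
  have h2 := (h1.exp).const_mul ((Real.sqrt (2*Real.pi*v))⁻¹)
  have hfun : gaussianPDFReal 0 v = fun y => (Real.sqrt (2*Real.pi*v))⁻¹ * Real.exp (-(y - 0)^2 / (2*(v:ℝ))) := by
    funext y; simp [gaussianPDFReal]
  rw [hfun]
  convert h2 using 1
  all_goals try rfl
  simp [gaussianPDFReal]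
  ring

lemma my_stein {v : NNReal} (hv : 0 < v) (f : ℝ → ℝ) (hf : ContDiff ℝ 1 f)
    (h1 : Integrable (fun x => x * f x) (gaussianReal 0 v))
    (h2 : Integrable (fun x => deriv f x) (gaussianReal 0 v))
    (ht : Tendsto (fun x => f x * Real.exp (-(x^2)/(2*(v:ℝ)))) atTop (nhds 0))
    (hb : Tendsto (fun x => f x * Real.exp (-(x^2)/(2*(v:ℝ)))) atBot (nhds 0)) :
    ∫ x, x * f x ∂(gaussianReal 0 v) = (v:ℝ) * ∫ x, deriv f x ∂(gaussianReal 0 v) := by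
  have hv0 : v ≠ 0 := hv.ne'
  have hv' : (0:ℝ) < v := by exact_mod_cast hv
  set p : ℝ → ℝ := gaussianPDFReal 0 v with hp_def
  have hu : ∀ x, HasDerivAt f (deriv f x) x :=
    fun x => ((hf.differentiable one_ne_zero) x).hasDerivAt
  have hp : ∀ x, HasDerivAt p (-(x / v) * p x) x := fun x => my_hasDerivAt_pdf hv0 x
  -- integrability conversions
  have h1' : Integrable (fun x => p x * (x * f x)) volume :=
    (my_integrable_gaussian_iff hv0 _).mp h1
  have h2' : Integrable (fun x => p x * deriv f x) volume :=
    (my_integrable_gaussian_iff hv0 _).mp h2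
  have huv' : Integrable (f * fun x => -(x / v) * p x) volume := by
    refine (h1'.const_mul (-(v:ℝ)⁻¹)).congr (Filter.Eventually.of_forall fun x => ?_)
    simp only [Pi.mul_apply]
    field_simp
  have hu'v : Integrable ((deriv f) * p) volume := by
    refine h2'.congr (Filter.Eventually.of_forall fun x => ?_)
    simp only [Pi.mul_apply]; ring
  -- tail behavior
  have hfp : (f * p) = fun x => (Real.sqrt (2*Real.pi*v))⁻¹ * (f x * Real.exp (-(x^2)/(2*(v:ℝ)))) := by
    funext x; simp only [Pi.mul_apply, hp_def, gaussianPDFReal]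
    ring_nf
  have htop' : Tendsto (f * p) atTop (nhds 0) := by
    rw [hfp]
    simpa using ht.const_mul ((Real.sqrt (2*Real.pi*v))⁻¹)
  have hbot' : Tendsto (f * p) atBot (nhds 0) := by
    rw [hfp]
    simpa using hb.const_mul ((Real.sqrt (2*Real.pi*v))⁻¹)
  have IBP := integral_mul_deriv_eq_deriv_mul (fun x _ => hu x) (fun x _ => hp x) huv' hu'v hbot' htop'
  -- IBP : ∫ x, f x * (-(x / v) * p x) = 0 - 0 - ∫ x, deriv f x * p x
  have hL : ∫ x, f x * (-(x / (v:ℝ)) * p x) = -(v:ℝ)⁻¹ * ∫ x, p x * (x * f x) := by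
    rw [← integral_const_mul]
    congr 1; funext x
    field_simp
  rw [hL] at IBP
  have hkey : ∫ x, p x * (x * f x) = (v:ℝ) * ∫ x, p x * deriv f x := by
    have h3 : ∫ x, deriv f x * p x = ∫ x, p x * deriv f x := by
      congr 1; funext x; ring
    have := IBP
    rw [h3] at this
    have : -(v:ℝ)⁻¹ * ∫ x, p x * (x * f x) = -(∫ x, p x * deriv f x) := by linarith
    field_simp at this
    simp only [mul_assoc] at this
    linarith
  rw [my_integral_gaussian_eq hv0, my_integral_gaussian_eq hv0, hkey]

lemma my_exp_quad_top {a : ℝ} (b c : ℝ) (ha : a < 0) :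
    Tendsto (fun x => Real.exp (a*x^2 + b*x + c)) atTop (nhds 0) := by
  have h1 : Tendsto (fun x : ℝ => (a*x + b) * x + c) atTop atBot :=
    tendsto_atBot_add_const_right _ c
      ((tendsto_atBot_add_const_right _ b (tendsto_id.const_mul_atTop_of_neg ha)).atBot_mul_atTop₀
        tendsto_id)
  have h : Tendsto (fun x : ℝ => a*x^2 + b*x + c) atTop atBot :=
    h1.congr fun x => by ring
  exact Real.tendsto_exp_atBot.comp h

lemma my_exp_quad_bot {a : ℝ} (b c : ℝ) (ha : a < 0) :
    Tendsto (fun x => Real.exp (a*x^2 + b*x + c)) atBot (nhds 0) := by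
  have h1 : Tendsto (fun x : ℝ => (a*x + b) * x + c) atBot atBot :=
    tendsto_atBot_add_const_right _ c
      ((tendsto_atTop_add_const_right _ b (tendsto_id.const_mul_atBot_of_neg ha)).atTop_mul_atBot₀
        tendsto_id)
  have h : Tendsto (fun x : ℝ => a*x^2 + b*x + c) atBot atBot :=
    h1.congr fun x => by ring
  exact Real.tendsto_exp_atBot.comp h

lemma my_tail_shift {vX v : ℝ} (hvX : 0 < vX) (hlt : vX < v) (g : ℝ → ℝ) (n : ℝ)
    (htop : Tendsto (fun y => g y * Real.exp (-(y^2)/(2*v))) atTop (nhds 0))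
    (hbot : Tendsto (fun y => g y * Real.exp (-(y^2)/(2*v))) atBot (nhds 0)) :
    Tendsto (fun x => g (x+n) * Real.exp (-(x^2)/(2*vX))) atTop (nhds 0)
    ∧ Tendsto (fun x => g (x+n) * Real.exp (-(x^2)/(2*vX))) atBot (nhds 0) := by
  have hv : 0 < v := hvX.trans hlt
  set a : ℝ := 1/(2*v) - 1/(2*vX) with ha_def
  have ha : a < 0 := by
    rw [ha_def, sub_neg]
    apply one_div_lt_one_div_of_lt <;> linarith
  have key : ∀ x, g (x+n) * Real.exp (-(x^2)/(2*vX))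
      = (g (x+n) * Real.exp (-((x+n)^2)/(2*v))) * Real.exp (a*x^2 + (n/v)*x + n^2/(2*v)) := by
    intro x
    rw [mul_assoc, ← Real.exp_add]
    congr 1
    congr 1
    rw [ha_def]
    have := hv.ne'
    have := hvX.ne'
    field_simp
    ring
  constructor
  · have t1 : Tendsto (fun x => g (x+n) * Real.exp (-((x+n)^2)/(2*v))) atTop (nhds 0) :=
      htop.comp (tendsto_atTop_add_const_right atTop n tendsto_id)
    have t2 := my_exp_quad_top (n/v) (n^2/(2*v)) ha
    exact Tendsto.congr (fun x => (key x).symm) (by simpa using t1.mul t2)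
  · have t1 : Tendsto (fun x => g (x+n) * Real.exp (-((x+n)^2)/(2*v))) atBot (nhds 0) :=
      hbot.comp (tendsto_atBot_add_const_right atBot n tendsto_id)
    have t2 := my_exp_quad_bot (n/v) (n^2/(2*v)) ha
    exact Tendsto.congr (fun x => (key x).symm) (by simpa using t1.mul t2)

end SteinAux


open MeasureTheory ProbabilityTheory Filter

/-- Stein-type identity: for independent centered Gaussians `X ~ N(0, vX)`,
`N ~ N(0, vN)` and a C¹ nonlinearity `g` with vanishing Gaussian tails,
`E[X·g(X+N)] = σ_X²·E[g′(X+N)]`; in particular `k_x = E[g′(Y)]`. -/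
theorem gaussian_partial_gain_eq_avg_derivative
    {Ω : Type*} {mΩ : MeasurableSpace Ω} (μ : Measure Ω) [IsProbabilityMeasure μ]
    (X N : Ω → ℝ) (hXmeas : Measurable X) (hNmeas : Measurable N)
    (vX vN : NNReal) (hvX : 0 < vX) (hvN : 0 < vN)
    (hX : μ.map X = gaussianReal 0 vX) (hN : μ.map N = gaussianReal 0 vN)
    (hindep : IndepFun X N μ)
    (g : ℝ → ℝ) (hg : ContDiff ℝ 1 g)
    (hgX : Integrable (fun ω => g (X ω + N ω) * X ω) μ)
    (hg' : Integrable (fun ω => deriv g (X ω + N ω)) μ)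
    (htop : Tendsto (fun y => g y * Real.exp (-(y ^ 2) / (2 * ((vX : ℝ) + (vN : ℝ)))))
      atTop (nhds 0))
    (hbot : Tendsto (fun y => g y * Real.exp (-(y ^ 2) / (2 * ((vX : ℝ) + (vN : ℝ)))))
      atBot (nhds 0)) :
    (∫ ω, X ω * g (X ω + N ω) ∂μ) = (vX : ℝ) * ∫ ω, deriv g (X ω + N ω) ∂μ
    ∧ (∫ ω, g (X ω + N ω) * X ω ∂μ) / (vX : ℝ) = ∫ ω, deriv g (X ω + N ω) ∂μ := by
  have hπ : Measurable (fun ω => (X ω, N ω)) := hXmeas.prodMk hNmeas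
  set γX := gaussianReal 0 vX with hγX
  set γN := gaussianReal 0 vN with hγN
  have hmap : μ.map (fun ω => (X ω, N ω)) = γX.prod γN := by
    rw [← hX, ← hN]
    exact (indepFun_iff_map_prod_eq_prod_map_map hXmeas.aemeasurable
      hNmeas.aemeasurable).mp hindep
  have hgc : Continuous g := hg.continuous
  have hdgc : Continuous (deriv g) := hg.continuous_deriv le_rfl
  have hFc : Continuous (fun p : ℝ×ℝ => p.1 * g (p.1 + p.2)) :=
    continuous_fst.mul (hgc.comp (continuous_fst.add continuous_snd))
  have hGc : Continuous (fun p : ℝ×ℝ => deriv g (p.1 + p.2)) :=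
    hdgc.comp (continuous_fst.add continuous_snd)
  have hFi : Integrable (fun p : ℝ×ℝ => p.1 * g (p.1 + p.2)) (γX.prod γN) := by
    rw [← hmap, integrable_map_measure hFc.aestronglyMeasurable hπ.aemeasurable]
    refine hgX.congr (Filter.Eventually.of_forall fun ω => ?_)
    simp [Function.comp, mul_comm]
  have hGi : Integrable (fun p : ℝ×ℝ => deriv g (p.1 + p.2)) (γX.prod γN) := by
    rw [← hmap, integrable_map_measure hGc.aestronglyMeasurable hπ.aemeasurable]
    exact hg'.congr (Filter.Eventually.of_forall fun ω => rfl)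
  have key : ∀ᵐ n ∂γN, (∫ x, x * g (x + n) ∂γX) = (vX:ℝ) * ∫ x, deriv g (x + n) ∂γX := by
    filter_upwards [hFi.prod_left_ae, hGi.prod_left_ae] with n h1 h2
    have hvX' : (0:ℝ) < (vX:ℝ) := by exact_mod_cast hvX
    have hlt : (vX:ℝ) < (vX:ℝ) + (vN:ℝ) :=
      lt_add_of_pos_right _ (by exact_mod_cast hvN)
    obtain ⟨ht, hb⟩ := my_tail_shift hvX' hlt g n htop hbot
    have hder : ∀ x, deriv (fun y => g (y + n)) x = deriv g (x + n) := fun x =>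
      deriv_comp_add_const g n x
    have hfn : ContDiff ℝ 1 (fun y => g (y + n)) :=
      hg.comp (contDiff_id.add contDiff_const)
    have hs := my_stein hvX (fun y => g (y + n)) hfn
      (by exact h1) (by
        refine h2.congr (Filter.Eventually.of_forall fun x => ?_)
        exact (hder x).symm)
      ht hb
    rw [hs]
    congr 1
    exact integral_congr_ae (Filter.Eventually.of_forall fun x => hder x)
  have hmain : (∫ ω, X ω * g (X ω + N ω) ∂μ) = (vX : ℝ) * ∫ ω, deriv g (X ω + N ω) ∂μ := by
    calc ∫ ω, X ω * g (X ω + N ω) ∂μ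
        = ∫ p : ℝ×ℝ, p.1 * g (p.1 + p.2) ∂(γX.prod γN) := by
          rw [← hmap, integral_map hπ.aemeasurable
            (by rw [hmap]; exact hFc.aestronglyMeasurable)]
      _ = ∫ n, ∫ x, x * g (x + n) ∂γX ∂γN := integral_prod_symm _ hFi
      _ = ∫ n, (vX:ℝ) * ∫ x, deriv g (x + n) ∂γX ∂γN := integral_congr_ae key
      _ = (vX:ℝ) * ∫ n, ∫ x, deriv g (x + n) ∂γX ∂γN := integral_const_mul _ _
      _ = (vX:ℝ) * ∫ p : ℝ×ℝ, deriv g (p.1 + p.2) ∂(γX.prod γN) := by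
          rw [integral_prod_symm _ hGi]
      _ = (vX : ℝ) * ∫ ω, deriv g (X ω + N ω) ∂μ := by
          rw [← hmap, integral_map hπ.aemeasurable
            (by rw [hmap]; exact hGc.aestronglyMeasurable)]
  refine ⟨hmain, ?_⟩
  have hvX0 : (vX:ℝ) ≠ 0 := by positivity
  have hcomm : (∫ ω, g (X ω + N ω) * X ω ∂μ) = ∫ ω, X ω * g (X ω + N ω) ∂μ := by
    exact integral_congr_ae (Filter.Eventually.of_forall fun ω => mul_comm _ _)
  rw [hcomm, hmain, mul_comm, mul_div_assoc, div_self hvX0, mul_one]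
end

section
/- Let X and N be independent real random variables, X distributed as the centered Gaussian law G(0, σ_X²) with σ_X > 0, and N distributed as the Gaussian mixture Σ_{l=0}^L β_l·G(0, σ_{N,l}²) with weights β_l ≥ 0 summing to 1 and σ_{N,l} > 0. Let g : ℝ → ℝ be measurable such that g(X+N)·X is integrable and each integral below is finite. Then the partial regression coefficient of g(X+N) on X satisfies k_x := E[g(X+N)·X]/σ_X² = Σ_{l=0}^L β_l·k^{(l)}, where k^{(l)} = (∫ g(y)·y dG(0, σ_X² + σ_{N,l}²)(y)) / (σ_X² + σ_{N,l}²) is the input–output regression coefficient of g under the l-th virtual Gaussian input of variance σ_X² + σ_{N,l}². -/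
open MeasureTheory ProbabilityTheory Real
open scoped NNReal ENNReal


lemma gaussianPDFReal_even {v : ℝ≥0} (x : ℝ) :
    gaussianPDFReal 0 v (-x) = gaussianPDFReal 0 v x := by
  simp [gaussianPDFReal]

lemma integrable_id_mul_gaussianPDFReal_zero {v : ℝ≥0} (hv : v ≠ 0) :
    Integrable (fun x => x * gaussianPDFReal 0 v x) := by
  have hv' : (0:ℝ) < v := by positivity
  have h := (integrable_mul_exp_neg_mul_sq (b := (2 * (v:ℝ))⁻¹) (by positivity)).const_mul
    ((Real.sqrt (2 * π * v))⁻¹)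
  refine h.congr (Filter.Eventually.of_forall fun x => ?_)
  simp only [gaussianPDFReal]
  rw [neg_mul, ← div_eq_inv_mul (x^2)]
  ring_nf

lemma integral_id_mul_gaussianPDFReal_zero {v : ℝ≥0} (hv : v ≠ 0) :
    ∫ x, x * gaussianPDFReal 0 v x = 0 := by
  have h : ∫ x, x * gaussianPDFReal 0 v x = ∫ x, (-x) * gaussianPDFReal 0 v (-x) := by
    exact (integral_neg_eq_self (fun x => x * gaussianPDFReal 0 v x) volume).symm
  have h2 : ∫ x, (-x) * gaussianPDFReal 0 v (-x) = - ∫ x, x * gaussianPDFReal 0 v x := by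
    rw [← integral_neg]
    congr 1; ext x
    rw [gaussianPDFReal_even]; ring
  linarith [h, h2]

lemma integrable_id_mul_gaussianPDFReal (m : ℝ) {v : ℝ≥0} (hv : v ≠ 0) :
    Integrable (fun x => x * gaussianPDFReal m v x) := by
  have hbase : Integrable (fun t => (t + m) * gaussianPDFReal 0 v t) := by
    have h := (integrable_id_mul_gaussianPDFReal_zero hv).add
      ((integrable_gaussianPDFReal 0 v).const_mul m)
    refine h.congr (Filter.Eventually.of_forall fun x => ?_)
    simp only [Pi.add_apply]
    ring
  have := hbase.comp_sub_right m
  refine this.congr (Filter.Eventually.of_forall fun x => ?_)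
  simp only [Function.comp]
  rw [sub_add_cancel, gaussianPDFReal_sub, zero_add]

lemma integral_id_mul_gaussianPDFReal (m : ℝ) {v : ℝ≥0} (hv : v ≠ 0) :
    ∫ x, x * gaussianPDFReal m v x = m := by
  have key : ∀ x : ℝ, x * gaussianPDFReal m v x
      = (fun t => (t + m) * gaussianPDFReal 0 v t) (x - m) := by
    intro x
    simp only []
    rw [sub_add_cancel, gaussianPDFReal_sub, zero_add]
  rw [integral_congr_ae (Filter.Eventually.of_forall key),
    integral_sub_right_eq_self (fun t => (t + m) * gaussianPDFReal 0 v t) m]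
  have h1 : Integrable (fun t : ℝ => t * gaussianPDFReal 0 v t) :=
    integrable_id_mul_gaussianPDFReal_zero hv
  have h2 : Integrable (fun t : ℝ => m * gaussianPDFReal 0 v t) :=
    (integrable_gaussianPDFReal 0 v).const_mul m
  have : ∫ t, (t + m) * gaussianPDFReal 0 v t
      = ∫ t, (t * gaussianPDFReal 0 v t + m * gaussianPDFReal 0 v t) := by
    congr 1; ext t; ring
  rw [this, integral_add h1 h2, integral_id_mul_gaussianPDFReal_zero hv,
    integral_const_mul, integral_gaussianPDFReal_eq_one 0 hv]
  ring

lemma gaussianReal_eq_withDensity (m : ℝ) {v : ℝ≥0} (hv : v ≠ 0) :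
    gaussianReal m v
      = volume.withDensity (fun x => ((gaussianPDFReal m v x).toNNReal : ℝ≥0∞)) := by
  rw [gaussianReal_of_var_ne_zero _ hv]
  rfl

lemma integral_gaussianReal_eq {v : ℝ≥0} (hv : v ≠ 0) (m : ℝ) (f : ℝ → ℝ) :
    ∫ x, f x ∂(gaussianReal m v) = ∫ x, gaussianPDFReal m v x * f x := by
  rw [gaussianReal_eq_withDensity m hv,
    integral_withDensity_eq_integral_smul ((measurable_gaussianPDFReal m v).real_toNNReal) f]
  congr 1
  ext x
  rw [NNReal.smul_def, Real.coe_toNNReal _ (gaussianPDFReal_nonneg m v x), smul_eq_mul]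

lemma integrable_gaussianReal_iff {v : ℝ≥0} (hv : v ≠ 0) (m : ℝ) {f : ℝ → ℝ} :
    Integrable f (gaussianReal m v)
      ↔ Integrable (fun x => gaussianPDFReal m v x * f x) volume := by
  rw [gaussianReal_eq_withDensity m hv,
    integrable_withDensity_iff_integrable_smul ((measurable_gaussianPDFReal m v).real_toNNReal)]
  constructor <;> intro h <;> refine h.congr (Filter.Eventually.of_forall fun x => ?_) <;>
    simp only [NNReal.smul_def, Real.coe_toNNReal _ (gaussianPDFReal_nonneg m v x), smul_eq_mul]
lemma gauss_prod_identity {a b : ℝ≥0} (ha : a ≠ 0) (hb : b ≠ 0) (x y : ℝ) :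
    gaussianPDFReal 0 a x * gaussianPDFReal 0 b (y - x)
      = gaussianPDFReal 0 (a + b) y
        * gaussianPDFReal ((a : ℝ) * y / ((a : ℝ) + (b : ℝ))) (a * b / (a + b)) x := by
  have haR : (0:ℝ) < a := by positivity
  have hbR : (0:ℝ) < b := by positivity
  have hsR : (0:ℝ) < (a:ℝ) + b := by positivity
  have hcR : ((a * b / (a + b) : ℝ≥0) : ℝ) = (a:ℝ) * b / ((a:ℝ) + b) := by push_cast; ring
  simp only [gaussianPDFReal, sub_zero, NNReal.coe_add, hcR]
  conv_lhs => rw [mul_mul_mul_comm]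
  conv_rhs => rw [mul_mul_mul_comm]
  rw [← Real.exp_add, ← Real.exp_add, ← mul_inv, ← mul_inv]
  congr 1
  · congr 1
    rw [← Real.sqrt_mul (by positivity), ← Real.sqrt_mul (by positivity)]
    congr 1
    field_simp
  · congr 1
    field_simp
    ring

lemma core_gaussian_regression {a b : ℝ≥0} (ha : a ≠ 0) (hb : b ≠ 0) {g : ℝ → ℝ}
    (hg : Measurable g)
    (hint : Integrable (fun q : ℝ × ℝ => g (q.1 + q.2) * q.1)
      ((gaussianReal 0 a).prod (gaussianReal 0 b))) :
    ∫ q : ℝ × ℝ, g (q.1 + q.2) * q.1 ∂((gaussianReal 0 a).prod (gaussianReal 0 b))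
      = ((a : ℝ) / ((a : ℝ) + (b : ℝ))) * ∫ y, g y * y ∂(gaussianReal 0 (a + b)) := by
  have hs : a + b ≠ 0 := fun h => ha (by simpa using (add_eq_zero.mp h).1)
  have hc : a * b / (a + b) ≠ 0 := div_ne_zero (mul_ne_zero ha hb) hs
  set pa := gaussianPDFReal 0 a with hpa
  set pb := gaussianPDFReal 0 b with hpb
  set F₀ : ℝ × ℝ → ℝ := fun q => pa q.1 * (pb q.2 * (g (q.1 + q.2) * q.1)) with hF₀
  have hgmeas : Measurable fun q : ℝ × ℝ => g (q.1 + q.2) * q.1 :=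
    (hg.comp (measurable_fst.add measurable_snd)).mul measurable_fst
  have hF₀meas : Measurable F₀ :=
    ((measurable_gaussianPDFReal 0 a).comp measurable_fst).mul
      (((measurable_gaussianPDFReal 0 b).comp measurable_snd).mul hgmeas)
  -- Integrability of F₀ w.r.t. Lebesgue on ℝ²
  obtain ⟨h1, h2⟩ := (integrable_prod_iff hint.aestronglyMeasurable).mp hint
  have hF₀int : Integrable F₀ (volume.prod volume) := by
    refine (integrable_prod_iff hF₀meas.aestronglyMeasurable).mpr ⟨?_, ?_⟩
    · have h1' : ∀ᵐ x ∂(volume : Measure ℝ),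
          Integrable (fun n => g (x + n) * x) (gaussianReal 0 b) :=
        h1.filter_mono (gaussianReal_absolutelyContinuous' 0 ha).ae_le
      filter_upwards [h1'] with x hx
      exact ((integrable_gaussianReal_iff hb 0).mp hx).const_mul (pa x)
    · have key : ∀ x, (∫ n, ‖F₀ (x, n)‖)
          = pa x * ∫ n, ‖g (x + n) * x‖ ∂(gaussianReal 0 b) := by
        intro x
        rw [integral_gaussianReal_eq hb 0, ← integral_const_mul]
        congr 1; ext n
        simp only [hF₀, Real.norm_eq_abs, abs_mul,
          abs_of_nonneg (gaussianPDFReal_nonneg 0 a x),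
          abs_of_nonneg (gaussianPDFReal_nonneg 0 b n), hpa, hpb]
      have h2' := ((integrable_gaussianReal_iff ha 0).mp h2).congr
        (Filter.Eventually.of_forall fun x => (key x).symm)
      exact h2'
  -- shear integrability
  have hshear : Integrable
      (Function.uncurry fun x y => F₀ (x, y - x)) (volume.prod volume) := by
    have hmp := measurePreserving_prod_sub (volume : Measure ℝ) volume
    exact (hmp.integrable_comp hF₀meas.aestronglyMeasurable).mpr hF₀int
  have inner_eq : ∀ y, (∫ x, F₀ (x, y - x))
      = ((a : ℝ) / ((a : ℝ) + (b : ℝ)))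
        * ((g y * y) * gaussianPDFReal 0 (a + b) y) := by
    intro y
    have e1 : ∀ x, F₀ (x, y - x)
        = g y * (gaussianPDFReal 0 (a + b) y
            * (x * gaussianPDFReal ((a : ℝ) * y / ((a : ℝ) + (b : ℝ))) (a * b / (a + b)) x)) := by
      intro x
      have hxy : x + (y - x) = y := by ring
      simp only [hF₀, hpa, hpb, hxy]
      rw [show gaussianPDFReal 0 a x * (gaussianPDFReal 0 b (y - x) * (g y * x))
          = (gaussianPDFReal 0 a x * gaussianPDFReal 0 b (y - x)) * (g y * x) from by ring,
        gauss_prod_identity ha hb x y]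
      ring
    rw [integral_congr_ae (Filter.Eventually.of_forall e1), integral_const_mul,
      integral_const_mul, integral_id_mul_gaussianPDFReal _ hc]
    have hsR : (0:ℝ) < (a:ℝ) + b := by positivity
    field_simp
  calc ∫ q : ℝ × ℝ, g (q.1 + q.2) * q.1 ∂((gaussianReal 0 a).prod (gaussianReal 0 b))
      = ∫ x, ∫ n, g (x + n) * x ∂(gaussianReal 0 b) ∂(gaussianReal 0 a) :=
        integral_prod _ hint
    _ = ∫ x, pa x * ∫ n, g (x + n) * x ∂(gaussianReal 0 b) :=
        integral_gaussianReal_eq ha 0 _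
    _ = ∫ x, pa x * ∫ n, pb n * (g (x + n) * x) := by
        congr 1; ext x; rw [integral_gaussianReal_eq hb 0]
    _ = ∫ x, ∫ n, F₀ (x, n) := by
        congr 1; ext x; rw [← integral_const_mul]
    _ = ∫ x, ∫ y, F₀ (x, y - x) := by
        congr 1; ext x
        exact (integral_sub_right_eq_self (fun n => F₀ (x, n)) x).symm
    _ = ∫ y, ∫ x, F₀ (x, y - x) := integral_integral_swap hshear
    _ = ∫ y, ((a : ℝ) / ((a : ℝ) + (b : ℝ)))
          * ((g y * y) * gaussianPDFReal 0 (a + b) y) := by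
        congr 1; ext y; rw [inner_eq]
    _ = ((a : ℝ) / ((a : ℝ) + (b : ℝ)))
          * ∫ y, (g y * y) * gaussianPDFReal 0 (a + b) y := integral_const_mul _ _
    _ = ((a : ℝ) / ((a : ℝ) + (b : ℝ))) * ∫ y, g y * y ∂(gaussianReal 0 (a + b)) := by
        rw [integral_gaussianReal_eq hs 0]
        congr 1
        · exact integral_congr_ae (Filter.Eventually.of_forall fun y => mul_comm _ _)

lemma nnreal_smul_measure_eq {α : Type*} {mα : MeasurableSpace α} (c : ℝ≥0) (m : Measure α) :
    c • m = (c : ℝ≥0∞) • m := rfl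

lemma prod_ennreal_smul_right {α β : Type*} {mα : MeasurableSpace α} {mβ : MeasurableSpace β}
    (μ : Measure α) [SFinite μ] (c : ℝ≥0∞) (hc : c ≠ ⊤) (ν : Measure β) [SFinite ν] :
    μ.prod (c • ν) = c • μ.prod ν := by
  ext s hs
  rw [Measure.smul_apply, Measure.prod_apply hs, Measure.prod_apply hs, smul_eq_mul,
    ← lintegral_const_mul' _ _ hc]
  simp [Measure.smul_apply]

lemma prod_mono_right {α β : Type*} {mα : MeasurableSpace α} {mβ : MeasurableSpace β}
    (μ : Measure α) [SFinite μ] {ν₁ ν₂ : Measure β} [SFinite ν₁] [SFinite ν₂] (h : ν₁ ≤ ν₂) :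
    μ.prod ν₁ ≤ μ.prod ν₂ := by
  rw [Measure.le_iff]
  intro s hs
  rw [Measure.prod_apply hs, Measure.prod_apply hs]
  exact lintegral_mono fun x => h _

lemma sfinite_finset_sum {β ι : Type*} {mβ : MeasurableSpace β} (s : Finset ι)
    (m : ι → Measure β) [∀ i, SFinite (m i)] : SFinite (∑ i ∈ s, m i) := by
  classical
  induction s using Finset.induction with
  | empty => rw [Finset.sum_empty]; infer_instance
  | @insert i s' h ih => rw [Finset.sum_insert h]; haveI := ih; infer_instance

lemma prod_finset_sum' {α β ι : Type*} {mα : MeasurableSpace α} {mβ : MeasurableSpace β}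
    (s : Finset ι) (μ : Measure α) [SFinite μ] (m : ι → Measure β) [∀ i, SFinite (m i)] :
    μ.prod (∑ i ∈ s, m i) = ∑ i ∈ s, μ.prod (m i) := by
  classical
  induction s using Finset.induction with
  | empty => simp
  | @insert i s' h ih =>
    haveI := sfinite_finset_sum s' m
    rw [Finset.sum_insert h, Finset.sum_insert h, Measure.prod_add, ih]

/-- If `X ~ G(0, vX)` and `N` is an independent zero-mean Gaussian mixture, then
the partial regression coefficient of `g(X+N)` on `X` is the weighted sum
`k_x = Σ_l β_l·k⁽ˡ⁾` of the input-output regression coefficients of the virtual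
Gaussian inputs of variance `vX + vN_l`. -/
theorem mixture_partial_gain_kx
    {Ω : Type*} {mΩ : MeasurableSpace Ω} (μ : Measure Ω) [IsProbabilityMeasure μ]
    (X N : Ω → ℝ) (hXmeas : Measurable X) (hNmeas : Measurable N)
    (hindep : IndepFun X N μ)
    (vX : NNReal) (hvX : 0 < vX)
    (L : ℕ) (β : ℕ → NNReal) (hβ : ∑ l ∈ Finset.range (L + 1), β l = 1)
    (vN : ℕ → NNReal) (hvN : ∀ l ∈ Finset.range (L + 1), 0 < vN l)
    (hX : μ.map X = gaussianReal 0 vX)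
    (hN : μ.map N = ∑ l ∈ Finset.range (L + 1), β l • gaussianReal 0 (vN l))
    (g : ℝ → ℝ) (hg : Measurable g)
    (hgX : Integrable (fun ω => g (X ω + N ω) * X ω) μ)
    (hgl : ∀ l ∈ Finset.range (L + 1),
      Integrable (fun y => g y * y) (gaussianReal 0 (vX + vN l))) :
    (∫ ω, g (X ω + N ω) * X ω ∂μ) / (vX : ℝ)
      = ∑ l ∈ Finset.range (L + 1),
          (β l : ℝ) * ((∫ y, g y * y ∂(gaussianReal 0 (vX + vN l)))
            / ((vX : ℝ) + (vN l : ℝ))) := by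
  have hvX' : vX ≠ 0 := hvX.ne'
  set f : ℝ × ℝ → ℝ := fun q => g (q.1 + q.2) * q.1 with hf
  have hfmeas : Measurable f := (hg.comp (measurable_fst.add measurable_snd)).mul measurable_fst
  set Ga := gaussianReal 0 vX with hGa
  set ν := μ.map N with hν
  -- joint law is the product measure
  have hpair : μ.map (fun ω => (X ω, N ω)) = Ga.prod ν := by
    rw [(indepFun_iff_map_prod_eq_prod_map_map hXmeas.aemeasurable
      hNmeas.aemeasurable).mp hindep, hX]
  have hpair_meas : AEMeasurable (fun ω => (X ω, N ω)) μ :=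
    (hXmeas.prodMk hNmeas).aemeasurable
  have hint : Integrable f (Ga.prod ν) := by
    rw [← hpair]
    exact (integrable_map_measure hfmeas.aestronglyMeasurable hpair_meas).mpr hgX
  have hEq1 : ∫ ω, g (X ω + N ω) * X ω ∂μ = ∫ q, f q ∂(Ga.prod ν) := by
    rw [← hpair, integral_map hpair_meas hfmeas.aestronglyMeasurable]
  -- split the mixture
  have hN' : ν = ∑ l ∈ Finset.range (L + 1), ((β l : ℝ≥0∞)) • gaussianReal 0 (vN l) := hN
  have hsplit : Ga.prod ν
      = ∑ l ∈ Finset.range (L + 1), ((β l : ℝ≥0∞)) • Ga.prod (gaussianReal 0 (vN l)) := by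
    rw [hN', prod_finset_sum']
    exact Finset.sum_congr rfl fun l _ =>
      prod_ennreal_smul_right Ga _ ENNReal.coe_ne_top _
  -- integrability w.r.t. each component
  have hle : ∀ l ∈ Finset.range (L + 1),
      ((β l : ℝ≥0∞)) • gaussianReal 0 (vN l) ≤ ν := by
    intro l hl
    rw [hN', Measure.le_iff]
    intro s hs
    rw [Measure.finset_sum_apply]
    exact Finset.single_le_sum (f := fun i => (((β i : ℝ≥0∞)) • gaussianReal 0 (vN i)) s)
      (fun i _ => zero_le) hl
  have hint_l : ∀ l ∈ Finset.range (L + 1),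
      Integrable f (((β l : ℝ≥0∞)) • Ga.prod (gaussianReal 0 (vN l))) := by
    intro l hl
    rw [← prod_ennreal_smul_right Ga _ ENNReal.coe_ne_top]
    exact hint.mono_measure (prod_mono_right Ga (hle l hl))
  -- per-term evaluation
  have hterm : ∀ l ∈ Finset.range (L + 1),
      (∫ q, f q ∂(((β l : ℝ≥0∞)) • Ga.prod (gaussianReal 0 (vN l))))
        = (β l : ℝ) * (((vX : ℝ) / ((vX : ℝ) + (vN l : ℝ)))
            * ∫ y, g y * y ∂(gaussianReal 0 (vX + vN l))) := by
    intro l hl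
    by_cases hβl : β l = 0
    · simp [hβl]
    · rw [integral_smul_measure]
      have hintl : Integrable f (Ga.prod (gaussianReal 0 (vN l))) := by
        refine (integrable_smul_measure (c := (β l : ℝ≥0∞)) ?_ ENNReal.coe_ne_top).mp
          (hint_l l hl)
        simpa using hβl
      rw [core_gaussian_regression hvX' (hvN l hl).ne' hg hintl]
      simp [smul_eq_mul]
  rw [hEq1, hsplit, integral_finset_sum_measure hint_l, Finset.sum_congr rfl hterm,
    Finset.sum_div]
  refine Finset.sum_congr rfl fun l hl => ?_
  have h1 : (vX : ℝ) ≠ 0 := by exact_mod_cast hvX'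
  have h2 : (vX : ℝ) + (vN l : ℝ) ≠ 0 := by positivity
  field_simp
end

section
/- Let X and N be independent real random variables, X distributed as the centered Gaussian law G(0, σ_X²) with σ_X > 0, and N distributed as the Gaussian mixture Σ_{l=0}^L β_l·G(0, σ_{N,l}²) with weights β_l ≥ 0 summing to 1 and σ_{N,l} > 0; set σ_N² = Σ_{l=0}^L β_l·σ_{N,l}². Let g : ℝ → ℝ be measurable such that g(X+N)·N is integrable and each integral below is finite. Then the partial regression coefficient of g(X+N) on N satisfies k_n := E[g(X+N)·N]/σ_N² = Σ_{l=0}^L (σ_{N,l}²/σ_N²)·β_l·k^{(l)}, where k^{(l)} = (∫ g(y)·y dG(0, σ_X² + σ_{N,l}²)(y)) / (σ_X² + σ_{N,l}²). -/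
open MeasureTheory ProbabilityTheory
open scoped NNReal ENNReal Real

namespace MixtureAuxKn

/-- The shear `(x, n) ↦ (x + n, n)` as a measurable equiv. -/
def eqT : ℝ × ℝ ≃ᵐ ℝ × ℝ where
  toEquiv :=
    { toFun := fun p => (p.1 + p.2, p.2)
      invFun := fun q => (q.1 - q.2, q.2)
      left_inv := fun p => by simp
      right_inv := fun q => by simp }
  measurable_toFun := (measurable_fst.add measurable_snd).prodMk measurable_snd
  measurable_invFun := (measurable_fst.sub measurable_snd).prodMk measurable_snd

/-- The shear `(y, w) ↦ (y, w + k y)` as a measurable equiv. -/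
def eqS (k : ℝ) : ℝ × ℝ ≃ᵐ ℝ × ℝ where
  toEquiv :=
    { toFun := fun p => (p.1, p.2 + k * p.1)
      invFun := fun q => (q.1, q.2 - k * q.1)
      left_inv := fun p => by simp
      right_inv := fun q => by simp }
  measurable_toFun := measurable_fst.prodMk (measurable_snd.add (measurable_fst.const_mul k))
  measurable_invFun := measurable_fst.prodMk (measurable_snd.sub (measurable_fst.const_mul k))

lemma eqT_apply (p : ℝ × ℝ) : eqT p = (p.1 + p.2, p.2) := rfl
lemma eqT_symm_apply (q : ℝ × ℝ) : eqT.symm q = (q.1 - q.2, q.2) := rfl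
lemma eqS_apply (k : ℝ) (p : ℝ × ℝ) : eqS k p = (p.1, p.2 + k * p.1) := rfl
lemma eqS_symm_apply (k : ℝ) (q : ℝ × ℝ) : (eqS k).symm q = (q.1, q.2 - k * q.1) := rfl

lemma mp_eqT :
    MeasurePreserving eqT ((volume : Measure ℝ).prod volume) ((volume : Measure ℝ).prod volume) := by
  have h := (Measure.measurePreserving_swap (μ := (volume : Measure ℝ)) (ν := volume)).comp
    (measurePreserving_prod_add_swap (volume : Measure ℝ) volume)
  have hfun : (⇑eqT) = (Prod.swap ∘ fun z : ℝ × ℝ => (z.2, z.2 + z.1)) := by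
    funext p
    show (p.1 + p.2, p.2) = (p.2 + p.1, p.2)
    rw [add_comm]
  rw [hfun]
  exact h

lemma mp_eqS (k : ℝ) :
    MeasurePreserving (eqS k) ((volume : Measure ℝ).prod volume)
      ((volume : Measure ℝ).prod volume) := by
  have h := (MeasurePreserving.id (volume : Measure ℝ)).skew_product
    (g := fun x y => y + k * x)
    (measurable_snd.add (measurable_fst.const_mul k))
    (Filter.Eventually.of_forall fun x =>
      (measurePreserving_add_right (volume : Measure ℝ) (k * x)).map_eq)
  exact h

lemma map_withDensity_equiv {e : ℝ × ℝ ≃ᵐ ℝ × ℝ} {P : Measure (ℝ × ℝ)}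
    (hPe : MeasurePreserving e P P) {ρ : ℝ × ℝ → ℝ≥0∞} (hρ : Measurable ρ) :
    Measure.map e (P.withDensity ρ) = P.withDensity fun q => ρ (e.symm q) := by
  ext s hs
  rw [Measure.map_apply e.measurable hs, withDensity_apply _ (e.measurable hs),
    withDensity_apply _ hs]
  calc ∫⁻ x in e ⁻¹' s, ρ x ∂P
      = ∫⁻ x in e ⁻¹' s, ρ (e.symm (e x)) ∂P := by
        simp only [MeasurableEquiv.symm_apply_apply]
    _ = ∫⁻ y in s, ρ (e.symm y) ∂(Measure.map e P) :=
        (setLIntegral_map hs (hρ.comp e.symm.measurable) e.measurable).symm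
    _ = ∫⁻ y in s, ρ (e.symm y) ∂P := by rw [hPe.map_eq]

lemma gaussian_prod_withDensity (v w : ℝ≥0) (hv : v ≠ 0) (hw : w ≠ 0) :
    (gaussianReal 0 v).prod (gaussianReal 0 w)
      = ((volume : Measure ℝ).prod volume).withDensity
          (fun p => gaussianPDF 0 v p.1 * gaussianPDF 0 w p.2) := by
  refine Measure.prod_eq fun s t hs ht => ?_
  rw [withDensity_apply _ (hs.prod ht), ← Measure.prod_restrict,
    lintegral_prod_mul (measurable_gaussianPDF 0 v).aemeasurable
      (measurable_gaussianPDF 0 w).aemeasurable,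
    gaussianReal_of_var_ne_zero _ hv, gaussianReal_of_var_ne_zero _ hw,
    withDensity_apply _ hs, withDensity_apply _ ht]

lemma pdfReal_identity (a b c : ℝ≥0) (ha : a ≠ 0) (hb : b ≠ 0)
    (hc : (c : ℝ) = a * b / ((a : ℝ) + b)) (y n : ℝ) :
    gaussianPDFReal 0 a (y - n) * gaussianPDFReal 0 b n
      = gaussianPDFReal 0 (a + b) y
          * gaussianPDFReal 0 c (n - (b : ℝ) / ((a : ℝ) + b) * y) := by
  have ha' : (0 : ℝ) < a := by positivity
  have hb' : (0 : ℝ) < b := by positivity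
  have hab : (0 : ℝ) < (a : ℝ) + b := by linarith
  have hc' : (0 : ℝ) < c := by rw [hc]; positivity
  simp only [gaussianPDFReal, sub_zero, NNReal.coe_add]
  rw [mul_mul_mul_comm, mul_mul_mul_comm ((√(2 * π * ((a : ℝ) + b)))⁻¹)]
  congr 1
  · rw [← mul_inv, ← mul_inv, ← Real.sqrt_mul (by positivity), ← Real.sqrt_mul (by positivity)]
    congr 1
    rw [hc]
    field_simp
  · rw [← Real.exp_add, ← Real.exp_add]
    congr 1
    rw [hc]
    field_simp
    ring

lemma key_measure (a b c : ℝ≥0) (ha : a ≠ 0) (hb : b ≠ 0) (hcne : c ≠ 0)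
    (hc : (c : ℝ) = a * b / ((a : ℝ) + b)) :
    Measure.map eqT ((gaussianReal 0 a).prod (gaussianReal 0 b))
      = Measure.map (eqS ((b : ℝ) / ((a : ℝ) + b)))
          ((gaussianReal 0 (a + b)).prod (gaussianReal 0 c)) := by
  have habne : a + b ≠ 0 := by
    intro h
    exact ha (by simpa using (add_eq_zero.mp h).1)
  rw [gaussian_prod_withDensity a b ha hb, gaussian_prod_withDensity (a + b) c habne hcne,
    map_withDensity_equiv (ρ := fun p => gaussianPDF 0 a p.1 * gaussianPDF 0 b p.2) mp_eqT
      (((measurable_gaussianPDF 0 a).comp measurable_fst).mul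
        ((measurable_gaussianPDF 0 b).comp measurable_snd)),
    map_withDensity_equiv (ρ := fun p => gaussianPDF 0 (a + b) p.1 * gaussianPDF 0 c p.2)
      (mp_eqS _)
      (((measurable_gaussianPDF 0 (a + b)).comp measurable_fst).mul
        ((measurable_gaussianPDF 0 c).comp measurable_snd))]
  congr 1
  funext q
  show gaussianPDF 0 a (q.1 - q.2) * gaussianPDF 0 b q.2
      = gaussianPDF 0 (a + b) q.1 * gaussianPDF 0 c (q.2 - (b : ℝ) / ((a : ℝ) + b) * q.1)
  simp only [gaussianPDF]
  rw [← ENNReal.ofReal_mul (gaussianPDFReal_nonneg _ _ _),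
    ← ENNReal.ofReal_mul (gaussianPDFReal_nonneg _ _ _),
    pdfReal_identity a b c ha hb hc]

lemma gaussian_mean_zero (v : ℝ≥0) : ∫ x, x ∂(gaussianReal 0 v) = 0 := by
  by_cases hv : v = 0
  · simp [hv, gaussianReal_zero_var]
  rw [gaussianReal_of_var_ne_zero _ hv]
  have h1 : ∫ x, x ∂(volume.withDensity (gaussianPDF 0 v))
      = ∫ x, (Real.toNNReal (gaussianPDFReal 0 v x)) • x ∂volume :=
    integral_withDensity_eq_integral_smul
      ((measurable_gaussianPDFReal 0 v).real_toNNReal) _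
  rw [h1]
  have h2 : ∀ x : ℝ, (Real.toNNReal (gaussianPDFReal 0 v x)) • x
      = gaussianPDFReal 0 v x * x := by
    intro x
    rw [NNReal.smul_def, smul_eq_mul, Real.coe_toNNReal _ (gaussianPDFReal_nonneg 0 v x)]
  simp only [h2]
  have hodd : ∀ x : ℝ, gaussianPDFReal 0 v (-x) * (-x) = -(gaussianPDFReal 0 v x * x) := by
    intro x
    have : gaussianPDFReal 0 v (-x) = gaussianPDFReal 0 v x := by
      simp [gaussianPDFReal, neg_sq, sub_zero]
    rw [this]; ring
  have h3 : ∫ x : ℝ, gaussianPDFReal 0 v x * x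
      = - ∫ x : ℝ, gaussianPDFReal 0 v x * x := by
    conv_lhs => rw [← integral_neg_eq_self (fun x => gaussianPDFReal 0 v x * x) volume]
    simp only [hodd]
    rw [integral_neg]
  linarith

lemma keyA (a b : ℝ≥0) (ha : a ≠ 0) (hb : b ≠ 0) {g : ℝ → ℝ} (hg : Measurable g)
    (hint : Integrable (fun p : ℝ × ℝ => g (p.1 + p.2) * p.2)
      ((gaussianReal 0 a).prod (gaussianReal 0 b)))
    (hgy : Integrable (fun y => g y * y) (gaussianReal 0 (a + b))) :
    ∫ p : ℝ × ℝ, g (p.1 + p.2) * p.2 ∂((gaussianReal 0 a).prod (gaussianReal 0 b))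
      = ((b : ℝ) / ((a : ℝ) + b)) * ∫ y, g y * y ∂(gaussianReal 0 (a + b)) := by
  have ha' : (0 : ℝ) < a := by positivity
  have hb' : (0 : ℝ) < b := by positivity
  have hab : (0 : ℝ) < (a : ℝ) + b := by linarith
  set k : ℝ := (b : ℝ) / ((a : ℝ) + b) with hk
  set cR : ℝ := (a : ℝ) * b / ((a : ℝ) + b) with hcR
  have hcR0 : 0 < cR := by positivity
  set c : ℝ≥0 := Real.toNNReal cR with hcdef
  have hcoe : (c : ℝ) = (a : ℝ) * b / ((a : ℝ) + b) := by
    rw [hcdef, Real.coe_toNNReal _ hcR0.le]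
  have hcne : c ≠ 0 := by
    rw [hcdef, Ne, Real.toNNReal_eq_zero, not_le]
    exact hcR0
  set Pab : Measure (ℝ × ℝ) := (gaussianReal 0 a).prod (gaussianReal 0 b) with hPab
  set P' : Measure (ℝ × ℝ) := (gaussianReal 0 (a + b)).prod (gaussianReal 0 c) with hP'
  have hmapeq : Measure.map eqT Pab = Measure.map (eqS k) P' :=
    key_measure a b c ha hb hcne hcoe
  have hFmeas : Measurable fun q : ℝ × ℝ => g q.1 * q.2 :=
    (hg.comp measurable_fst).mul measurable_snd
  -- move the integral to P'
  have step1 : ∫ p : ℝ × ℝ, g (p.1 + p.2) * p.2 ∂Pab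
      = ∫ q : ℝ × ℝ, g q.1 * q.2 ∂(Measure.map eqT Pab) :=
    (MeasureTheory.integral_map_equiv eqT (fun q : ℝ × ℝ => g q.1 * q.2)).symm
  have step2 : ∫ q : ℝ × ℝ, g q.1 * q.2 ∂(Measure.map (eqS k) P')
      = ∫ p : ℝ × ℝ, g p.1 * (p.2 + k * p.1) ∂P' :=
    MeasureTheory.integral_map_equiv (eqS k) (fun q : ℝ × ℝ => g q.1 * q.2)
  -- integrability on P'
  have hIall : Integrable (fun p : ℝ × ℝ => g p.1 * (p.2 + k * p.1)) P' := by
    have h1 : Integrable (fun q : ℝ × ℝ => g q.1 * q.2) (Measure.map eqT Pab) :=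
      (MeasureTheory.integrable_map_equiv eqT (fun q : ℝ × ℝ => g q.1 * q.2)).mpr hint
    rw [hmapeq] at h1
    exact (MeasureTheory.integrable_map_equiv (eqS k) (fun q : ℝ × ℝ => g q.1 * q.2)).mp h1
  have hmapfst : Measure.map Prod.fst P' = gaussianReal 0 (a + b) := by
    rw [hP', Measure.map_fst_prod]
    simp
  have hI1 : Integrable (fun p : ℝ × ℝ => g p.1 * p.1) P' := by
    have := (integrable_map_measure
      (f := (Prod.fst : ℝ × ℝ → ℝ)) (g := fun y => g y * y)
      (by rw [hmapfst]; exact (hg.mul measurable_id).aestronglyMeasurable)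
      measurable_fst.aemeasurable).mp (by rw [hmapfst]; exact hgy)
    exact this
  have hI2 : Integrable (fun p : ℝ × ℝ => g p.1 * p.2) P' := by
    refine (hIall.sub (hI1.const_mul k)).congr (Filter.Eventually.of_forall fun p => ?_)
    simp only [Pi.sub_apply]
    ring
  -- compute the integral over P'
  have hval2 : ∫ p : ℝ × ℝ, g p.1 * p.1 ∂P' = ∫ y, g y * y ∂(gaussianReal 0 (a + b)) := by
    have hAE : AEStronglyMeasurable (fun y : ℝ => g y * y) (Measure.map Prod.fst P') := by
      rw [hmapfst]
      exact (hg.mul measurable_id).aestronglyMeasurable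
    have h := integral_map (μ := P') measurable_fst.aemeasurable hAE
    rw [hmapfst] at h
    exact h.symm
  have hval1 : ∫ p : ℝ × ℝ, g p.1 * p.2 ∂P' = 0 := by
    rw [hP', integral_prod _ (by rw [← hP']; exact hI2)]
    have : ∀ x : ℝ, ∫ y, g x * y ∂(gaussianReal 0 c) = 0 := fun x => by
      rw [integral_const_mul, gaussian_mean_zero, mul_zero]
    simp [this]
  have hsplit : ∫ p : ℝ × ℝ, g p.1 * (p.2 + k * p.1) ∂P'
      = (∫ p : ℝ × ℝ, g p.1 * p.2 ∂P') + k * ∫ p : ℝ × ℝ, g p.1 * p.1 ∂P' := by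
    rw [← integral_const_mul, ← integral_add hI2 (hI1.const_mul k)]
    exact integral_congr_ae (Filter.Eventually.of_forall fun p => by ring)
  rw [step1, hmapeq, step2, hsplit, hval1, hval2, zero_add]

end MixtureAuxKn

open MixtureAuxKn

/-- If `X ~ G(0, vX)` and `N` is an independent zero-mean Gaussian mixture with
variance `σ_N² = Σ_l β_l·vN_l`, then the partial regression coefficient of
`g(X+N)` on `N` is `k_n = Σ_l (vN_l/σ_N²)·β_l·k⁽ˡ⁾`. -/
theorem mixture_partial_gain_kn
    {Ω : Type*} {mΩ : MeasurableSpace Ω} (μ : Measure Ω) [IsProbabilityMeasure μ]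
    (X N : Ω → ℝ) (hXmeas : Measurable X) (hNmeas : Measurable N)
    (hindep : IndepFun X N μ)
    (vX : NNReal) (hvX : 0 < vX)
    (L : ℕ) (β : ℕ → NNReal) (hβ : ∑ l ∈ Finset.range (L + 1), β l = 1)
    (vN : ℕ → NNReal) (hvN : ∀ l ∈ Finset.range (L + 1), 0 < vN l)
    (hX : μ.map X = gaussianReal 0 vX)
    (hN : μ.map N = ∑ l ∈ Finset.range (L + 1), β l • gaussianReal 0 (vN l))
    (g : ℝ → ℝ) (hg : Measurable g)
    (hgN : Integrable (fun ω => g (X ω + N ω) * N ω) μ)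
    (hgl : ∀ l ∈ Finset.range (L + 1),
      Integrable (fun y => g y * y) (gaussianReal 0 (vX + vN l))) :
    (∫ ω, g (X ω + N ω) * N ω ∂μ)
        / (∑ l ∈ Finset.range (L + 1), (β l : ℝ) * (vN l : ℝ))
      = ∑ l ∈ Finset.range (L + 1),
          ((vN l : ℝ) / (∑ j ∈ Finset.range (L + 1), (β j : ℝ) * (vN j : ℝ)))
            * (β l : ℝ)
            * ((∫ y, g y * y ∂(gaussianReal 0 (vX + vN l)))
              / ((vX : ℝ) + (vN l : ℝ))) := by
  classical
  set t : Finset ℕ := Finset.range (L + 1) with ht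
  -- the mixture measure and the component product measures
  set ν : Measure ℝ := ∑ l ∈ t, β l • gaussianReal 0 (vN l) with hν
  haveI hνprob : IsProbabilityMeasure ν :=
    hN ▸ Measure.isProbabilityMeasure_map hNmeas.aemeasurable
  set Pl : ℕ → Measure (ℝ × ℝ) := fun l => (gaussianReal 0 vX).prod (gaussianReal 0 (vN l))
    with hPl
  -- joint law
  have hpairmeas : Measurable fun ω => (X ω, N ω) := hXmeas.prodMk hNmeas
  have hpair : μ.map (fun ω => (X ω, N ω)) = (gaussianReal 0 vX).prod ν := by
    rw [← hX, ← hN]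
    exact (indepFun_iff_map_prod_eq_prod_map_map hXmeas.aemeasurable
      hNmeas.aemeasurable).mp hindep
  -- product distributes over the mixture
  have hproddec : (gaussianReal 0 vX).prod ν = ∑ l ∈ t, β l • Pl l := by
    refine Measure.prod_eq fun s u hs hu => ?_
    have hrhs : (∑ l ∈ t, β l • Pl l) (s ×ˢ u) = ∑ l ∈ t, β l • (Pl l) (s ×ˢ u) := by
      rw [Measure.finset_sum_apply]
      exact Finset.sum_congr rfl fun l _ => Measure.smul_apply _ _ _
    rw [hrhs]
    have hν_apply : ν u = ∑ l ∈ t, β l • gaussianReal 0 (vN l) u := by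
      rw [hν, Measure.finset_sum_apply]
      exact Finset.sum_congr rfl fun l _ => Measure.smul_apply _ _ _
    rw [hν_apply, Finset.mul_sum]
    refine Finset.sum_congr rfl fun l _ => ?_
    rw [hPl]
    rw [Measure.prod_prod]
    rw [ENNReal.smul_def, ENNReal.smul_def, smul_eq_mul, smul_eq_mul]
    ring
  -- the integrand on the product space
  set f : ℝ × ℝ → ℝ := fun p => g (p.1 + p.2) * p.2 with hf
  have hfmeas : Measurable f := (hg.comp (measurable_fst.add measurable_snd)).mul measurable_snd
  have hintM : Integrable f (∑ l ∈ t, β l • Pl l) := by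
    rw [← hproddec, ← hpair]
    exact (integrable_map_measure hfmeas.aestronglyMeasurable hpairmeas.aemeasurable).mpr hgN
  have hle : ∀ l ∈ t, β l • Pl l ≤ ∑ j ∈ t, β j • Pl j := by
    intro l hl
    refine Measure.le_intro fun s hs _ => ?_
    rw [Measure.finset_sum_apply]
    exact Finset.single_le_sum (f := fun j => (β j • Pl j) s) (fun j _ => zero_le) hl
  have hintl : ∀ l ∈ t, Integrable f (β l • Pl l) := fun l hl =>
    hintM.mono_measure (hle l hl)
  -- main integral computation
  have hcore : ∫ ω, g (X ω + N ω) * N ω ∂μ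
      = ∑ l ∈ t, (β l : ℝ) * (((vN l : ℝ) / ((vX : ℝ) + (vN l : ℝ)))
          * ∫ y, g y * y ∂(gaussianReal 0 (vX + vN l))) := by
    have h1 : ∫ ω, g (X ω + N ω) * N ω ∂μ = ∫ p, f p ∂(μ.map fun ω => (X ω, N ω)) :=
      (integral_map hpairmeas.aemeasurable hfmeas.aestronglyMeasurable).symm
    rw [h1, hpair, hproddec, integral_finset_sum_measure hintl]
    refine Finset.sum_congr rfl fun l hl => ?_
    have hsmul : (β l • Pl l : Measure (ℝ × ℝ)) = ((β l : ℝ≥0∞) • Pl l : Measure (ℝ × ℝ)) :=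
      ENNReal.smul_def (β l) (Pl l)
    rw [hsmul, integral_smul_measure]
    by_cases hβ0 : β l = 0
    · simp [hβ0]
    · have hβ0' : (β l : ℝ≥0∞) ≠ 0 := by exact_mod_cast hβ0
      have hintPl : Integrable f (Pl l) := by
        have := hintl l hl
        rw [hsmul] at this
        exact (integrable_smul_measure hβ0' ENNReal.coe_ne_top).mp this
      have := keyA vX (vN l) hvX.ne' (hvN l hl).ne' hg hintPl (hgl l hl)
      rw [ENNReal.coe_toReal, smul_eq_mul]
      rw [hPl]
      rw [this]
  -- final algebraic reshuffling
  rw [hcore, Finset.sum_div]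
  refine Finset.sum_congr rfl fun l hl => ?_
  simp only [div_eq_mul_inv]
  ring
end

section
/- Let X and N be independent real random variables distributed as the zero-mean Gaussian mixtures Σ_{l=0}^{L_x} β_l^{(x)}·G(0, σ_{X,l}²) and Σ_{j=0}^{L_n} β_j^{(n)}·G(0, σ_{N,j}²) respectively, with nonnegative weights each summing to 1 and all component variances positive; set σ_X² = Σ_l β_l^{(x)}·σ_{X,l}². Let g : ℝ → ℝ be measurable such that g(X+N)·X is integrable and each integral below is finite. Then k_x := E[g(X+N)·X]/σ_X² = Σ_{l=0}^{L_x} Σ_{j=0}^{L_n} β_l^{(x)}·β_j^{(n)}·(σ_{X,l}²/σ_X²)·k^{(l,j)}, where k^{(l,j)} = (∫ g(y)·y dG(0, σ_{X,l}² + σ_{N,j}²)(y)) / (σ_{X,l}² + σ_{N,j}²). -/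
open MeasureTheory ProbabilityTheory Real NNReal
open scoped ENNReal

section AuxGaussian

lemma dmpg_aux_int (v : ℝ≥0) (hv : v ≠ 0) :
    Integrable (fun t : ℝ => t * gaussianPDFReal 0 v t) := by
  have hv' : (0:ℝ) < (v:ℝ) := by positivity
  have h := (integrable_mul_exp_neg_mul_sq (b := (2*(v:ℝ))⁻¹) (by positivity)).const_mul
    ((Real.sqrt (2 * π * v))⁻¹)
  refine h.congr (Filter.Eventually.of_forall fun t => ?_)
  simp only [gaussianPDFReal, sub_zero]
  ring_nf

lemma dmpg_aux_odd (v : ℝ≥0) : ∫ t : ℝ, t * gaussianPDFReal 0 v t = 0 := by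
  have h2 := MeasureTheory.integral_neg_eq_self (fun t : ℝ => t * gaussianPDFReal 0 v t) volume
  have h : (fun t : ℝ => -t * gaussianPDFReal 0 v (-t))
      = fun t : ℝ => - (t * gaussianPDFReal 0 v t) := by
    funext t; simp only [gaussianPDFReal, neg_sq, sub_zero]; ring
  rw [show (fun t : ℝ => (fun t : ℝ => t * gaussianPDFReal 0 v t) (-t))
      = fun t : ℝ => -t * gaussianPDFReal 0 v (-t) from rfl, h, integral_neg] at h2
  linarith

lemma dmpg_aux_mean (v : ℝ≥0) (hv : v ≠ 0) (m : ℝ) :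
    ∫ x : ℝ, x * gaussianPDFReal m v x = m := by
  have hshift : ∀ x : ℝ, gaussianPDFReal m v x = gaussianPDFReal 0 v (x - m) := by
    intro x; simp [gaussianPDFReal]
  have h1 : (∫ x : ℝ, x * gaussianPDFReal m v x)
      = ∫ x : ℝ, (fun t => (t + m) * gaussianPDFReal 0 v t) (x - m) := by
    refine integral_congr_ae (Filter.Eventually.of_forall fun x => ?_)
    simp [hshift x]
  rw [h1, integral_sub_right_eq_self (fun t => (t + m) * gaussianPDFReal 0 v t) m]
  have : (fun t : ℝ => (t + m) * gaussianPDFReal 0 v t)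
      = fun t => t * gaussianPDFReal 0 v t + m * gaussianPDFReal 0 v t := by
    funext t; ring
  rw [this, integral_add (dmpg_aux_int v hv) ((integrable_gaussianPDFReal 0 v).const_mul m),
    dmpg_aux_odd v, integral_const_mul, integral_gaussianPDFReal_eq_one 0 hv]
  simp

lemma dmpg_pdf_conv (a b : ℝ≥0) (ha : a ≠ 0) (hb : b ≠ 0) (y x : ℝ) :
    gaussianPDFReal 0 a x * gaussianPDFReal 0 b (y - x)
      = gaussianPDFReal 0 (a + b) y
        * gaussianPDFReal ((a : ℝ) * y / ((a : ℝ) + (b : ℝ))) (a * b / (a + b)) x := by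
  have hA : (0:ℝ) < a := by positivity
  have hB : (0:ℝ) < b := by positivity
  have hAB : (0:ℝ) < (a:ℝ) + b := by linarith
  have hcoe1 : ((a + b : ℝ≥0) : ℝ) = (a:ℝ) + b := by push_cast; ring
  have hcoe2 : ((a * b / (a + b) : ℝ≥0) : ℝ) = (a:ℝ) * b / ((a:ℝ) + b) := by
    push_cast; ring
  simp only [gaussianPDFReal, sub_zero, hcoe1, hcoe2]
  have hsqrt : √(2 * π * a) * √(2 * π * b)
      = √(2 * π * ((a:ℝ) + b)) * √(2 * π * ((a:ℝ) * b / ((a:ℝ) + b))) := by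
    rw [← Real.sqrt_mul (by positivity), ← Real.sqrt_mul (by positivity)]
    congr 1
    field_simp
  have hexp : rexp (-x ^ 2 / (2 * a)) * rexp (-(y - x) ^ 2 / (2 * b))
      = rexp (-y ^ 2 / (2 * ((a:ℝ) + b)))
        * rexp (-(x - (a:ℝ) * y / ((a:ℝ) + b)) ^ 2 / (2 * ((a:ℝ) * b / ((a:ℝ) + b)))) := by
    rw [← Real.exp_add, ← Real.exp_add]
    congr 1
    field_simp
    ring
  calc (√(2 * π * a))⁻¹ * rexp (-x ^ 2 / (2 * a))
        * ((√(2 * π * b))⁻¹ * rexp (-(y - x) ^ 2 / (2 * b)))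
      = (√(2 * π * a) * √(2 * π * b))⁻¹
        * (rexp (-x ^ 2 / (2 * a)) * rexp (-(y - x) ^ 2 / (2 * b))) := by
        rw [mul_inv]; ring
    _ = (√(2 * π * ((a:ℝ) + b)) * √(2 * π * ((a:ℝ) * b / ((a:ℝ) + b))))⁻¹
        * (rexp (-y ^ 2 / (2 * ((a:ℝ) + b)))
          * rexp (-(x - (a:ℝ) * y / ((a:ℝ) + b)) ^ 2 / (2 * ((a:ℝ) * b / ((a:ℝ) + b))))) := by
        rw [hsqrt, hexp]
    _ = _ := by rw [mul_inv]; ring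

lemma dmpg_aux_A (a b : ℝ≥0) (ha : a ≠ 0) (hb : b ≠ 0) (y : ℝ) :
    ∫ x : ℝ, x * (gaussianPDFReal 0 a x * gaussianPDFReal 0 b (y - x))
      = ((a:ℝ) / ((a:ℝ) + b)) * y * gaussianPDFReal 0 (a + b) y := by
  have hA : (0:ℝ) < a := by positivity
  have hB : (0:ℝ) < b := by positivity
  have hc : (a * b / (a + b) : ℝ≥0) ≠ 0 := by
    rw [ne_eq, div_eq_zero_iff]
    push_neg
    constructor
    · exact mul_ne_zero ha hb
    · intro h; exact absurd h (by positivity)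
  simp_rw [dmpg_pdf_conv a b ha hb y]
  have : ∀ x : ℝ, x * (gaussianPDFReal 0 (a + b) y
        * gaussianPDFReal ((a : ℝ) * y / ((a : ℝ) + (b : ℝ))) (a * b / (a + b)) x)
      = gaussianPDFReal 0 (a + b) y
        * (x * gaussianPDFReal ((a : ℝ) * y / ((a : ℝ) + (b : ℝ))) (a * b / (a + b)) x) := by
    intro x; ring
  simp_rw [this, integral_const_mul, dmpg_aux_mean _ hc]
  ring

lemma dmpg_gaussian_prod (a b : ℝ≥0) (ha : a ≠ 0) (hb : b ≠ 0) :
    (gaussianReal 0 a).prod (gaussianReal 0 b)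
      = (volume.prod volume).withDensity
          (fun p => ENNReal.ofReal (gaussianPDFReal 0 a p.1 * gaussianPDFReal 0 b p.2)) := by
  refine Measure.prod_eq fun s t hs ht => ?_
  rw [withDensity_apply _ (hs.prod ht), ← Measure.prod_restrict]
  have hof : (fun p : ℝ × ℝ => ENNReal.ofReal (gaussianPDFReal 0 a p.1 * gaussianPDFReal 0 b p.2))
      = fun p : ℝ × ℝ => ENNReal.ofReal (gaussianPDFReal 0 a p.1)
          * ENNReal.ofReal (gaussianPDFReal 0 b p.2) := by
    funext p
    exact ENNReal.ofReal_mul (gaussianPDFReal_nonneg 0 a p.1)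
  rw [hof]
  rw [lintegral_prod_mul ((measurable_gaussianPDFReal 0 a).ennreal_ofReal).aemeasurable
    ((measurable_gaussianPDFReal 0 b).ennreal_ofReal).aemeasurable,
    gaussianReal_apply _ ha s, gaussianReal_apply _ hb t]
  rfl

lemma dmpg_core (a b : ℝ≥0) (ha : a ≠ 0) (hb : b ≠ 0) (g : ℝ → ℝ) (hg : Measurable g)
    (hI : Integrable (fun p : ℝ × ℝ => g (p.1 + p.2) * p.1)
      ((gaussianReal 0 a).prod (gaussianReal 0 b)))
    (hg2 : Integrable (fun y => g y * y) (gaussianReal 0 (a + b))) :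
    ∫ p : ℝ × ℝ, g (p.1 + p.2) * p.1 ∂((gaussianReal 0 a).prod (gaussianReal 0 b))
      = ((a:ℝ) / ((a:ℝ) + b)) * ∫ y, g y * y ∂(gaussianReal 0 (a + b)) := by
  classical
  set φa := gaussianPDFReal 0 a with hφa
  set φb := gaussianPDFReal 0 b with hφb
  set φc := gaussianPDFReal 0 (a + b) with hφc
  set D : ℝ × ℝ → ℝ≥0 := fun p => Real.toNNReal (φa p.1 * φb p.2) with hD
  have hDmeas : Measurable D :=
    (((measurable_gaussianPDFReal 0 a).comp measurable_fst).mul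
      ((measurable_gaussianPDFReal 0 b).comp measurable_snd)).real_toNNReal
  have hof : (fun p : ℝ × ℝ => ENNReal.ofReal (φa p.1 * φb p.2))
      = fun p : ℝ × ℝ => (D p : ℝ≥0∞) := rfl
  have hprod : (gaussianReal 0 a).prod (gaussianReal 0 b)
      = (volume.prod volume).withDensity (fun p => (D p : ℝ≥0∞)) := by
    rw [dmpg_gaussian_prod a b ha hb, hof]
  rw [hprod] at hI ⊢
  set F : ℝ × ℝ → ℝ := fun p => g (p.1 + p.2) * p.1 with hF
  have hDF : ∀ p : ℝ × ℝ, D p • F p = (φa p.1 * φb p.2) * F p := by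
    intro p
    rw [NNReal.smul_def, smul_eq_mul, Real.coe_toNNReal _
      (mul_nonneg (gaussianPDFReal_nonneg _ _ _) (gaussianPDFReal_nonneg _ _ _))]
  have hW : Integrable (fun p : ℝ × ℝ => (φa p.1 * φb p.2) * F p)
      (volume.prod volume) := by
    have := (integrable_withDensity_iff_integrable_smul hDmeas (g := F)).mp hI
    exact this.congr (Filter.Eventually.of_forall fun p => (hDF p))
  have h1 : ∫ p : ℝ × ℝ, F p ∂((volume.prod volume).withDensity (fun p => (D p : ℝ≥0∞)))
      = ∫ p : ℝ × ℝ, (φa p.1 * φb p.2) * F p ∂(volume.prod volume) := by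
    rw [integral_withDensity_eq_integral_smul hDmeas F]
    exact integral_congr_ae (Filter.Eventually.of_forall fun p => hDF p)
  set T : ℝ → ℝ → ℝ := fun x y => (φa x * φb (y - x)) * (g y * x) with hT
  have hTint : Integrable (Function.uncurry T) (volume.prod volume) := by
    have hmp := measurePreserving_prod_neg_add (volume : Measure ℝ) (volume : Measure ℝ)
    have := (hmp.integrable_comp hW.aestronglyMeasurable).mpr hW
    refine this.congr (Filter.Eventually.of_forall fun p => ?_)
    simp only [Function.comp_apply, Function.uncurry, hT, hF]
    have h2 : p.1 + (-p.1 + p.2) = p.2 := by ring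
    have h3 : -p.1 + p.2 = p.2 - p.1 := by ring
    rw [h2, h3]
  have h4 : ∫ p : ℝ × ℝ, (φa p.1 * φb p.2) * F p ∂(volume.prod volume)
      = ∫ x : ℝ, ∫ n : ℝ, (φa x * φb n) * (g (x + n) * x) ∂volume ∂volume := by
    rw [integral_prod _ hW]
  have h5 : ∀ x : ℝ, ∫ n : ℝ, (φa x * φb n) * (g (x + n) * x) ∂volume
      = ∫ y : ℝ, T x y ∂volume := by
    intro x
    have : (fun n : ℝ => (φa x * φb n) * (g (x + n) * x)) = fun n => T x (x + n) := by
      funext n; simp only [hT, add_sub_cancel_left]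
    rw [this, integral_add_left_eq_self (T x) x]
  have h6 : ∫ x : ℝ, ∫ y : ℝ, T x y ∂volume ∂volume
      = ∫ y : ℝ, ∫ x : ℝ, T x y ∂volume ∂volume := integral_integral_swap hTint
  have h7 : ∀ y : ℝ, ∫ x : ℝ, T x y ∂volume
      = g y * (((a:ℝ) / ((a:ℝ) + b)) * y * φc y) := by
    intro y
    have : (fun x : ℝ => T x y) = fun x => g y * (x * (φa x * φb (y - x))) := by
      funext x; simp only [hT]; ring
    rw [this, integral_const_mul, dmpg_aux_A a b ha hb y]
  have hab : a + b ≠ 0 := by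
    intro h
    exact ha (by simpa using congrArg (fun v => v) (add_eq_zero.mp h).1)
  set Dc : ℝ → ℝ≥0 := fun y => Real.toNNReal (φc y) with hDc
  have hDcmeas : Measurable Dc := (measurable_gaussianPDFReal 0 (a + b)).real_toNNReal
  have h8 : ∫ y, g y * y ∂(gaussianReal 0 (a + b)) = ∫ y : ℝ, φc y * (g y * y) ∂volume := by
    rw [gaussianReal_of_var_ne_zero 0 hab]
    have : gaussianPDF 0 (a + b) = fun y => (Dc y : ℝ≥0∞) := rfl
    rw [this, integral_withDensity_eq_integral_smul hDcmeas]
    refine integral_congr_ae (Filter.Eventually.of_forall fun y => ?_)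
    show Dc y • (g y * y) = φc y * (g y * y)
    rw [NNReal.smul_def, smul_eq_mul, Real.coe_toNNReal _ (gaussianPDFReal_nonneg _ _ _)]
  have h9 : ∫ y : ℝ, g y * (((a:ℝ) / ((a:ℝ) + b)) * y * φc y) ∂volume
      = ((a:ℝ) / ((a:ℝ) + b)) * ∫ y : ℝ, φc y * (g y * y) ∂volume := by
    have : (fun y : ℝ => g y * (((a:ℝ) / ((a:ℝ) + b)) * y * φc y))
        = fun y => ((a:ℝ) / ((a:ℝ) + b)) * (φc y * (g y * y)) := by
      funext y; ring
    rw [this, integral_const_mul]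
  calc ∫ p : ℝ × ℝ, F p ∂((volume.prod volume).withDensity (fun p => (D p : ℝ≥0∞)))
      = ∫ x : ℝ, ∫ n : ℝ, (φa x * φb n) * (g (x + n) * x) ∂volume ∂volume := by
        rw [h1, h4]
    _ = ∫ x : ℝ, ∫ y : ℝ, T x y ∂volume ∂volume := by simp_rw [h5]
    _ = ∫ y : ℝ, ∫ x : ℝ, T x y ∂volume ∂volume := h6
    _ = ∫ y : ℝ, g y * (((a:ℝ) / ((a:ℝ) + b)) * y * φc y) ∂volume := by simp_rw [h7]
    _ = ((a:ℝ) / ((a:ℝ) + b)) * ∫ y, g y * y ∂(gaussianReal 0 (a + b)) := by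
        rw [h9, h8]

end AuxGaussian

section AuxMeasure

variable {α β : Type*} [MeasurableSpace α] [MeasurableSpace β]

lemma dmpg_isFiniteMeasure_finset_sum {ι : Type*} (s : Finset ι) (μ : ι → Measure α)
    [h : ∀ i, IsFiniteMeasure (μ i)] : IsFiniteMeasure (∑ i ∈ s, μ i) := by
  classical
  induction s using Finset.induction_on with
  | empty => simp only [Finset.sum_empty]; infer_instance
  | insert _ _ hni ih =>
      rw [Finset.sum_insert hni]
      infer_instance

lemma dmpg_nnsmul_prod (c : ℝ≥0) (m : Measure α) (n : Measure β)
    [IsFiniteMeasure m] [IsFiniteMeasure n] :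
    (c • m).prod n = c • (m.prod n) := by
  refine Measure.prod_eq fun s t hs ht => ?_
  simp only [Measure.smul_apply, Measure.prod_prod, smul_eq_mul, ENNReal.smul_def]
  ring

lemma dmpg_prod_nnsmul (c : ℝ≥0) (m : Measure α) (n : Measure β)
    [IsFiniteMeasure m] [IsFiniteMeasure n] :
    m.prod (c • n) = c • (m.prod n) := by
  refine Measure.prod_eq fun s t hs ht => ?_
  simp only [Measure.smul_apply, Measure.prod_prod, smul_eq_mul, ENNReal.smul_def]
  ring

lemma dmpg_finset_sum_prod {ι : Type*} (s : Finset ι) (μ : ι → Measure α) (ν : Measure β)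
    [∀ i, IsFiniteMeasure (μ i)] [IsFiniteMeasure ν] :
    (∑ i ∈ s, μ i).prod ν = ∑ i ∈ s, (μ i).prod ν := by
  classical
  induction s using Finset.induction_on with
  | empty => simp
  | @insert i s hni ih =>
      haveI := dmpg_isFiniteMeasure_finset_sum s μ
      rw [Finset.sum_insert hni, Finset.sum_insert hni, Measure.add_prod, ih]

lemma dmpg_prod_finset_sum {ι : Type*} (s : Finset ι) (μ : Measure α) (ν : ι → Measure β)
    [∀ i, IsFiniteMeasure (ν i)] [IsFiniteMeasure μ] :
    μ.prod (∑ i ∈ s, ν i) = ∑ i ∈ s, μ.prod (ν i) := by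
  classical
  induction s using Finset.induction_on with
  | empty => simp
  | @insert i s hni ih =>
      haveI := dmpg_isFiniteMeasure_finset_sum s ν
      rw [Finset.sum_insert hni, Finset.sum_insert hni, Measure.prod_add, ih]

lemma dmpg_nnsmul_eq (c : ℝ≥0) (m : Measure α) : c • m = (c : ℝ≥0∞) • m := by
  ext s hs
  simp only [Measure.smul_apply, ENNReal.smul_def]

end AuxMeasure

/-- If `X` and `N` are independent zero-mean Gaussian mixtures, then the partial
regression coefficient of `g(X+N)` on `X` is the doubly-weighted sum
`k_x = Σ_l Σ_j β_l⁽ˣ⁾·β_j⁽ⁿ⁾·(σ_{X,l}²/σ_X²)·k^{(l,j)}` over the virtual Gaussian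
inputs of variance `σ_{X,l}² + σ_{N,j}²`. -/
theorem double_mixture_partial_gain_kx
    {Ω : Type*} {mΩ : MeasurableSpace Ω} (μ : Measure Ω) [IsProbabilityMeasure μ]
    (X N : Ω → ℝ) (hXmeas : Measurable X) (hNmeas : Measurable N)
    (hindep : IndepFun X N μ)
    (Lx Ln : ℕ)
    (βx : ℕ → NNReal) (hβx : ∑ l ∈ Finset.range (Lx + 1), βx l = 1)
    (βn : ℕ → NNReal) (hβn : ∑ j ∈ Finset.range (Ln + 1), βn j = 1)
    (vXl : ℕ → NNReal) (hvXl : ∀ l ∈ Finset.range (Lx + 1), 0 < vXl l)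
    (vNj : ℕ → NNReal) (hvNj : ∀ j ∈ Finset.range (Ln + 1), 0 < vNj j)
    (hX : μ.map X = ∑ l ∈ Finset.range (Lx + 1), βx l • gaussianReal 0 (vXl l))
    (hN : μ.map N = ∑ j ∈ Finset.range (Ln + 1), βn j • gaussianReal 0 (vNj j))
    (g : ℝ → ℝ) (hg : Measurable g)
    (hgX : Integrable (fun ω => g (X ω + N ω) * X ω) μ)
    (hglj : ∀ l ∈ Finset.range (Lx + 1), ∀ j ∈ Finset.range (Ln + 1),
      Integrable (fun y => g y * y) (gaussianReal 0 (vXl l + vNj j))) :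
    (∫ ω, g (X ω + N ω) * X ω ∂μ)
        / (∑ l ∈ Finset.range (Lx + 1), (βx l : ℝ) * (vXl l : ℝ))
      = ∑ l ∈ Finset.range (Lx + 1), ∑ j ∈ Finset.range (Ln + 1),
          (βx l : ℝ) * (βn j : ℝ)
            * ((vXl l : ℝ) / (∑ i ∈ Finset.range (Lx + 1), (βx i : ℝ) * (vXl i : ℝ)))
            * ((∫ y, g y * y ∂(gaussianReal 0 (vXl l + vNj j)))
              / ((vXl l : ℝ) + (vNj j : ℝ))) := by
  classical
  set F : ℝ × ℝ → ℝ := fun p => g (p.1 + p.2) * p.1 with hF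
  have hFmeas : Measurable F := (hg.comp (measurable_fst.add measurable_snd)).mul measurable_fst
  have hpairmeas : Measurable (fun ω => (X ω, N ω)) := hXmeas.prodMk hNmeas
  have hmap : μ.map (fun ω => (X ω, N ω)) = (μ.map X).prod (μ.map N) :=
    (indepFun_iff_map_prod_eq_prod_map_map hXmeas.aemeasurable hNmeas.aemeasurable).mp hindep
  -- decomposition of the joint law
  have hdec : μ.map (fun ω => (X ω, N ω))
      = ∑ l ∈ Finset.range (Lx + 1), ∑ j ∈ Finset.range (Ln + 1),
          ((βx l * βn j : ℝ≥0))
            • ((gaussianReal 0 (vXl l)).prod (gaussianReal 0 (vNj j))) := by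
    rw [hmap, hX, hN]
    rw [dmpg_finset_sum_prod]
    refine Finset.sum_congr rfl fun l _ => ?_
    haveI := dmpg_isFiniteMeasure_finset_sum (Finset.range (Ln + 1))
      (fun j => βn j • gaussianReal 0 (vNj j))
    rw [dmpg_nnsmul_prod, dmpg_prod_finset_sum, Finset.smul_sum]
    refine Finset.sum_congr rfl fun j _ => ?_
    rw [dmpg_prod_nnsmul, smul_smul]
  -- transfer integral and integrability to the joint law
  have hIμ : Integrable F (μ.map (fun ω => (X ω, N ω))) := by
    rw [integrable_map_measure hFmeas.aestronglyMeasurable hpairmeas.aemeasurable]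
    exact hgX
  have hIeq : ∫ ω, g (X ω + N ω) * X ω ∂μ = ∫ p, F p ∂(μ.map (fun ω => (X ω, N ω))) := by
    rw [integral_map hpairmeas.aemeasurable hFmeas.aestronglyMeasurable]
  rw [hdec] at hIμ
  -- decompose the integral over the double sum of measures
  have hIl : ∀ l ∈ Finset.range (Lx + 1), Integrable F
      (∑ j ∈ Finset.range (Ln + 1), ((βx l * βn j : ℝ≥0))
        • ((gaussianReal 0 (vXl l)).prod (gaussianReal 0 (vNj j)))) :=
    fun l hl => integrable_finset_sum_measure.mp hIμ l hl
  have hIlj : ∀ l ∈ Finset.range (Lx + 1), ∀ j ∈ Finset.range (Ln + 1), Integrable F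
      (((βx l * βn j : ℝ≥0))
        • ((gaussianReal 0 (vXl l)).prod (gaussianReal 0 (vNj j)))) :=
    fun l hl j hj => integrable_finset_sum_measure.mp (hIl l hl) j hj
  have hsum : ∫ p, F p ∂(μ.map (fun ω => (X ω, N ω)))
      = ∑ l ∈ Finset.range (Lx + 1), ∑ j ∈ Finset.range (Ln + 1),
          ((βx l : ℝ) * (βn j : ℝ))
            * ∫ p, F p ∂((gaussianReal 0 (vXl l)).prod (gaussianReal 0 (vNj j))) := by
    rw [hdec, integral_finset_sum_measure hIl]
    refine Finset.sum_congr rfl fun l hl => ?_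
    rw [integral_finset_sum_measure (hIlj l hl)]
    refine Finset.sum_congr rfl fun j hj => ?_
    rw [dmpg_nnsmul_eq, integral_smul_measure]
    simp only [ENNReal.coe_toReal, NNReal.coe_mul, smul_eq_mul]
  -- evaluate each term via the core Gaussian identity
  have hterm : ∀ l ∈ Finset.range (Lx + 1), ∀ j ∈ Finset.range (Ln + 1),
      ((βx l : ℝ) * (βn j : ℝ))
          * ∫ p, F p ∂((gaussianReal 0 (vXl l)).prod (gaussianReal 0 (vNj j)))
        = (βx l : ℝ) * (βn j : ℝ)
          * (((vXl l : ℝ) / ((vXl l : ℝ) + (vNj j : ℝ)))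
            * ∫ y, g y * y ∂(gaussianReal 0 (vXl l + vNj j))) := by
    intro l hl j hj
    by_cases h0 : (βx l) * (βn j) = 0
    · have : (βx l : ℝ) * (βn j : ℝ) = 0 := by
        have := congrArg (fun c : ℝ≥0 => (c : ℝ)) h0
        push_cast at this
        simpa using this
      rw [this]; ring
    · have hInt : Integrable F ((gaussianReal 0 (vXl l)).prod (gaussianReal 0 (vNj j))) := by
        have := hIlj l hl j hj
        rw [dmpg_nnsmul_eq] at this
        exact (integrable_smul_measure (by simpa using h0) ENNReal.coe_ne_top).mp this
      have hva : vXl l ≠ 0 := (hvXl l hl).ne'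
      have hvb : vNj j ≠ 0 := (hvNj j hj).ne'
      rw [dmpg_core (vXl l) (vNj j) hva hvb g hg hInt (hglj l hl j hj)]
  -- put everything together
  rw [hIeq, hsum]
  rw [Finset.sum_congr rfl (fun l hl => Finset.sum_congr rfl (fun j hj => hterm l hl j hj))]
  rw [Finset.sum_div]
  refine Finset.sum_congr rfl fun l _ => ?_
  rw [Finset.sum_div]
  refine Finset.sum_congr rfl fun j _ => ?_
  ring
end
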